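/- arXiv:0804.1299 — 11 statements merged into one kernel-verified Lean document; each statement's English description precedes it below -/
import Mathlib

section
/- For every integer n ≥ 3 and every integer m ≥ 2, the trivial upper bound n^m is not attained: I(n,m) < n^m. Equivalently, for n ≥ 3 and m ≥ 2 there exist two points of (ℤ/nℤ)^m that are not at integral distance. -/
/-- Two points `u, v ∈ (ℤ/nℤ)^m` are at integral distance if there exists
`d ∈ ℤ/nℤ` with `∑ i, (u i - v i)^2 = d^2`. -/
def IntegralDistance (n : ℕ) {m : ℕ} (u v : Fin m → ZMod n) : Prop :=
  ∃ d : ZMod n, ∑ i, (u i - v i) ^ 2 = d ^ 2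

/-- `maxIntegralCard n m` is the maximum cardinality of a subset of `(ℤ/nℤ)^m`
whose points are pairwise at integral distance. -/
noncomputable def maxIntegralCard (n m : ℕ) : ℕ :=
  sSup {k : ℕ | ∃ S : Finset (Fin m → ZMod n),
    (∀ u ∈ S, ∀ v ∈ S, IntegralDistance n u v) ∧ S.card = k}

lemma exists_nonsquare (n : ℕ) (hn : 3 ≤ n) :
    ∃ c : ZMod n, ¬ ∃ d : ZMod n, c = d ^ 2 := by
  haveI : NeZero n := ⟨by omega⟩
  by_contra h
  push_neg at h
  have hinj : Function.Injective (fun d : ZMod n => d ^ 2) := by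
    have hsurj : Function.Surjective (fun d : ZMod n => d ^ 2) := by
      intro c; obtain ⟨d, hd⟩ := h c; exact ⟨d, hd.symm⟩
    exact Finite.injective_iff_surjective.mpr hsurj
  have h1 : (1 : ZMod n) = (-1 : ZMod n) := by
    apply hinj; simp
  have h2 : ((2 : ℕ) : ZMod n) = 0 := by
    push_cast
    linear_combination h1
  rw [ZMod.natCast_eq_zero_iff] at h2
  have := Nat.le_of_dvd (by norm_num) h2
  omega

theorem maxIntegralCard_lt_pow (n m : ℕ) (hn : 3 ≤ n) (hm : 2 ≤ m) :
    maxIntegralCard n m < n ^ m ∧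
      ∃ u v : Fin m → ZMod n, ¬ IntegralDistance n u v := by
  haveI : NeZero n := ⟨by omega⟩
  have hex : ∃ k : ℕ, ¬ ∃ d : ZMod n, (k : ZMod n) = d ^ 2 := by
    obtain ⟨c, hc⟩ := exists_nonsquare n hn
    exact ⟨c.val, by simpa [ZMod.natCast_val, ZMod.cast_id] using hc⟩
  classical
  set k := Nat.find hex with hk
  have hknot : ¬ ∃ d : ZMod n, ((k : ℕ) : ZMod n) = d ^ 2 := Nat.find_spec hex
  have hkpos : 0 < k := by
    rcases Nat.eq_zero_or_pos k with h0 | h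
    · exfalso; apply hknot; exact ⟨0, by rw [h0]; simp⟩
    · exact h
  have hprev : ∃ d : ZMod n, ((k - 1 : ℕ) : ZMod n) = d ^ 2 := by
    by_contra h
    exact Nat.find_min hex (show k - 1 < k by omega) h
  obtain ⟨d, hd⟩ := hprev
  have h0 : (0 : ℕ) < m := by omega
  have h1 : (1 : ℕ) < m := by omega
  set i0 : Fin m := ⟨0, h0⟩
  set i1 : Fin m := ⟨1, h1⟩
  have hne : i0 ≠ i1 := by simp [i0, i1, Fin.ext_iff]
  set v : Fin m → ZMod n := fun i => if i = i0 then d else if i = i1 then 1 else 0 with hv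
  have hsum : ∑ i, ((0 : Fin m → ZMod n) i - v i) ^ 2 = ((k : ℕ) : ZMod n) := by
    have hstep : ∑ i, ((0 : Fin m → ZMod n) i - v i) ^ 2
        = ∑ i ∈ ({i0, i1} : Finset (Fin m)), ((0 : Fin m → ZMod n) i - v i) ^ 2 := by
      refine (Finset.sum_subset (Finset.subset_univ _) ?_).symm
      intro x _ hx
      simp only [Finset.mem_insert, Finset.mem_singleton, not_or] at hx
      simp [hv, hx.1, hx.2]
    rw [hstep, Finset.sum_pair hne]
    have : v i0 = d := by simp [hv]
    have h2 : v i1 = 1 := by simp [hv, hne.symm]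
    rw [this, h2]
    have hcast : ((k : ℕ) : ZMod n) = ((k - 1 : ℕ) : ZMod n) + 1 := by
      have : k = (k - 1) + 1 := by omega
      rw [this]; push_cast; ring
    rw [hcast, hd]
    simp only [Pi.zero_apply, zero_sub, neg_sq]
    ring
  have hbad : ¬ IntegralDistance n (0 : Fin m → ZMod n) v := by
    rintro ⟨e, he⟩
    exact hknot ⟨e, by rw [← hsum, he]⟩
  refine ⟨?_, 0, v, hbad⟩
  have hcard : Fintype.card (Fin m → ZMod n) = n ^ m := by
    simp [ZMod.card]
  have hbound : ∀ j ∈ {j : ℕ | ∃ S : Finset (Fin m → ZMod n),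
      (∀ u ∈ S, ∀ w ∈ S, IntegralDistance n u w) ∧ S.card = j}, j ≤ n ^ m - 1 := by
    rintro j ⟨S, hS, rfl⟩
    have hSne : S ≠ Finset.univ := by
      intro hfull
      exact hbad (hS 0 (hfull ▸ Finset.mem_univ _) v (hfull ▸ Finset.mem_univ _))
    have : S.card < Fintype.card (Fin m → ZMod n) := by
      rw [← Finset.card_univ]
      exact Finset.card_lt_card (Finset.ssubset_univ_iff.mpr hSne)
    omega
  have hnonempty : {j : ℕ | ∃ S : Finset (Fin m → ZMod n),
      (∀ u ∈ S, ∀ w ∈ S, IntegralDistance n u w) ∧ S.card = j}.Nonempty :=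
    ⟨0, ∅, by simp⟩
  have := csSup_le hnonempty hbound
  have hpow : 0 < n ^ m := pow_pos (by omega) m
  unfold maxIntegralCard
  omega
end

section
/- For every positive integer m and all points u,v ∈ (ℤ/3ℤ)^m, the points u and v are at integral distance if and only if their Hamming distance h(u,v) (the number of coordinates i with u_i ≠ v_i) is not congruent to 2 modulo 3. -/
lemma zmod3_sq : ∀ x : ZMod 3, x ^ 2 = if x = 0 then 0 else 1 := by
  decide

theorem integralDistance_iff_hammingDist_mod_three (m : ℕ) (hm : 0 < m)
    (u v : Fin m → ZMod 3) :
    IntegralDistance 3 u v ↔ hammingDist u v % 3 ≠ 2 := by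
  have hsum : ∑ i, (u i - v i) ^ 2 = (hammingDist u v : ZMod 3) := by
    rw [hammingDist, Finset.card_filter, Nat.cast_sum]
    apply Finset.sum_congr rfl
    intro i _
    rw [zmod3_sq _]
    by_cases h : u i = v i <;> simp [h, sub_eq_zero]
  unfold IntegralDistance
  rw [hsum]
  have hmod : (hammingDist u v : ZMod 3) = ((hammingDist u v % 3 : ℕ) : ZMod 3) := by
    exact (ZMod.natCast_mod _ 3).symm
  constructor
  · rintro ⟨d, hd⟩ h2
    rw [hmod, h2] at hd
    revert hd
    revert d
    decide
  · intro h
    rw [hmod]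
    have hlt : hammingDist u v % 3 < 3 := Nat.mod_lt _ (by norm_num)
    interval_cases h3 : hammingDist u v % 3
    · exact ⟨0, by decide⟩
    · exact ⟨1, by decide⟩
    · exact absurd rfl h
end

section
/- For all positive integers n and m, the number 2^m divides I(2n,m), where I(2n,m) is the maximum cardinality of a subset of (ℤ/2nℤ)^m whose points are pairwise at integral distance. -/
theorem pow_two_dvd_maxIntegralCard (n m : ℕ) (hn : 0 < n) (hm : 0 < m) :
    2 ^ m ∣ maxIntegralCard (2 * n) m := by
  classical
  haveI : NeZero (2 * n) := ⟨by omega⟩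
  set ν : ZMod (2 * n) := ((n : ℕ) : ZMod (2 * n)) with hν
  have h2ν : ν + ν = 0 := by
    rw [hν, ← Nat.cast_add]
    have h : n + n = 2 * n := by ring
    rw [h, ZMod.natCast_self]
  have hνne : ν ≠ 0 := by
    rw [hν]
    intro h
    rw [ZMod.natCast_eq_zero_iff] at h
    have := Nat.le_of_dvd hn h
    omega
  -- the subgroup H
  let H : AddSubgroup (Fin m → ZMod (2 * n)) :=
    { carrier := {t | ∀ i, t i = 0 ∨ t i = ν}
      zero_mem' := fun i => Or.inl rfl
      add_mem' := by
        intro a b ha hb i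
        rcases ha i with h1 | h1 <;> rcases hb i with h2 | h2 <;>
          simp [Pi.add_apply, h1, h2, h2ν]
      neg_mem' := by
        intro a ha i
        rcases ha i with h | h
        · left; simp [Pi.neg_apply, h]
        · right
          simp only [Pi.neg_apply, h]
          exact neg_eq_of_add_eq_zero_left h2ν }
  -- card of H as a finset
  have hHcard : (Finset.univ.filter (· ∈ H)).card = 2 ^ m := by
    have hinj : Function.Injective
        (fun b : Fin m → Bool => fun i => if b i then ν else (0 : ZMod (2 * n))) := by
      intro b b' hb
      funext i
      have := congrFun hb i
      by_cases h1 : b i <;> by_cases h2 : b' i <;>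
        simp_all
    have himg : Finset.univ.filter (· ∈ H) =
        Finset.univ.image (fun b : Fin m → Bool => fun i => if b i then ν else 0) := by
      ext t
      simp only [Finset.mem_filter, Finset.mem_univ, true_and, Finset.mem_image]
      constructor
      · intro ht
        refine ⟨fun i => if t i = 0 then false else true, ?_⟩
        funext i
        rcases ht i with h | h
        · simp [h]
        · simp [h, hνne]
      · rintro ⟨b, rfl⟩ i
        by_cases hb : b i <;> simp [hb]
    rw [himg, Finset.card_image_of_injective _ hinj, Finset.card_univ]
    simp
  -- attainment of the sup
  have hbdd : BddAbove {k : ℕ | ∃ S : Finset (Fin m → ZMod (2 * n)),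
      (∀ u ∈ S, ∀ v ∈ S, IntegralDistance (2 * n) u v) ∧ S.card = k} := by
    refine ⟨Fintype.card (Fin m → ZMod (2 * n)), ?_⟩
    rintro k ⟨S, -, rfl⟩
    exact Finset.card_le_univ S
  have hne : (0 : ℕ) ∈ {k : ℕ | ∃ S : Finset (Fin m → ZMod (2 * n)),
      (∀ u ∈ S, ∀ v ∈ S, IntegralDistance (2 * n) u v) ∧ S.card = k} :=
    ⟨∅, by simp, by simp⟩
  have hmem : maxIntegralCard (2 * n) m ∈ {k : ℕ | ∃ S : Finset (Fin m → ZMod (2 * n)),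
      (∀ u ∈ S, ∀ v ∈ S, IntegralDistance (2 * n) u v) ∧ S.card = k} :=
    Nat.sSup_mem ⟨0, hne⟩ hbdd
  obtain ⟨S, hS, hScard⟩ := hmem
  -- the enlarged set
  let mkH : (Fin m → ZMod (2 * n)) → (Fin m → ZMod (2 * n)) ⧸ H := QuotientAddGroup.mk
  let Q : Finset ((Fin m → ZMod (2 * n)) ⧸ H) := S.image mkH
  let S' : Finset (Fin m → ZMod (2 * n)) := Finset.univ.filter (fun x => mkH x ∈ Q)
  have hmkeq : ∀ a b : Fin m → ZMod (2 * n), mkH a = mkH b ↔ a - b ∈ H := by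
    intro a b
    rw [QuotientAddGroup.eq]
    constructor
    · intro h
      have := H.neg_mem h
      simpa [neg_add_rev, sub_eq_add_neg, add_comm] using this
    · intro h
      have := H.neg_mem h
      simpa [sub_eq_add_neg, neg_add_rev, add_comm] using this
  -- fibers
  have hfiber : ∀ q : (Fin m → ZMod (2 * n)) ⧸ H,
      (Finset.univ.filter fun x => mkH x = q).card = 2 ^ m := by
    intro q
    obtain ⟨a, rfl⟩ := QuotientAddGroup.mk_surjective q
    rw [← hHcard]
    apply Finset.card_bij (fun x _ => x - a)
    · intro x hx
      simp only [Finset.mem_filter, Finset.mem_univ, true_and] at hx ⊢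
      exact (hmkeq x a).mp hx
    · intro x hx y hy h
      exact sub_left_injective h
    · intro t ht
      simp only [Finset.mem_filter, Finset.mem_univ, true_and] at ht
      refine ⟨a + t, ?_, by abel⟩
      simp only [Finset.mem_filter, Finset.mem_univ, true_and]
      rw [hmkeq]
      simpa using ht
  have hS'eq : S' = Q.biUnion (fun q => Finset.univ.filter fun x => mkH x = q) := by
    ext x
    simp [S', Finset.mem_biUnion]
  have hdisj : ∀ q ∈ Q, ∀ q' ∈ Q, q ≠ q' →
      Disjoint (Finset.univ.filter fun x => mkH x = q)
        (Finset.univ.filter fun x => mkH x = q') := by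
    intro q _ q' _ hqq'
    rw [Finset.disjoint_left]
    intro x hx hx'
    simp only [Finset.mem_filter] at hx hx'
    exact hqq' (hx.2 ▸ hx'.2 ▸ rfl)
  have hcardS' : S'.card = Q.card * 2 ^ m := by
    rw [hS'eq, Finset.card_biUnion hdisj]
    rw [Finset.sum_congr rfl fun q _ => hfiber q, Finset.sum_const, smul_eq_mul]
  -- S ⊆ S'
  have hsub : S ⊆ S' := by
    intro s hs
    simp only [S', Finset.mem_filter, Finset.mem_univ, true_and]
    exact Finset.mem_image_of_mem mkH hs
  -- S' pairwise integral
  have hS'prop : ∀ u ∈ S', ∀ v ∈ S', IntegralDistance (2 * n) u v := by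
    intro x hx y hy
    simp only [S', Finset.mem_filter, Finset.mem_univ, true_and, Q,
      Finset.mem_image] at hx hy
    obtain ⟨u, hu, hxu⟩ := hx
    obtain ⟨v, hv, hyv⟩ := hy
    have hxuH : x - u ∈ H := by
      have h := (hmkeq u x).mp hxu
      have := H.neg_mem h
      simpa using this
    have hyvH : y - v ∈ H := by
      have h := (hmkeq v y).mp hyv
      have := H.neg_mem h
      simpa using this
    obtain ⟨d, hd⟩ := hS u hu v hv
    have hrH : (x - u) - (y - v) ∈ H := H.sub_mem hxuH hyvH
    set r : Fin m → ZMod (2 * n) := (x - u) - (y - v) with hr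
    have key : ∀ (t : Finset (Fin m)) (e : ZMod (2 * n)),
        ∃ e', e ^ 2 + ∑ i ∈ t, (r i) ^ 2 = e' ^ 2 := by
      intro t
      induction t using Finset.induction_on with
      | empty => intro e; exact ⟨e, by simp⟩
      | @insert a t ha ih =>
        intro e
        rw [Finset.sum_insert ha]
        rcases hrH a with h | h
        · obtain ⟨e', he'⟩ := ih e
          refine ⟨e', ?_⟩
          rw [show r a = 0 from h]
          linear_combination he'
        · obtain ⟨e', he'⟩ := ih (e + ν)
          refine ⟨e', ?_⟩
          rw [show r a = ν from h]
          linear_combination he' - e * h2ν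
    obtain ⟨e', he'⟩ := key Finset.univ d
    refine ⟨e', ?_⟩
    rw [← he', ← hd, ← Finset.sum_add_distrib]
    apply Finset.sum_congr rfl
    intro i _
    have hri : r i = (x i - u i) - (y i - v i) := rfl
    have hxy : x i - y i = (u i - v i) + r i := by rw [hri]; ring
    rw [hxy]
    rcases hrH i with h | h
    · rw [show r i = 0 from h]; ring
    · rw [show r i = ν from h]
      linear_combination (u i - v i) * h2ν
  -- conclude
  have hS'le : S'.card ≤ maxIntegralCard (2 * n) m := le_csSup hbdd ⟨S', hS'prop, rfl⟩
  have hle : maxIntegralCard (2 * n) m ≤ S'.card := by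
    rw [← hScard]; exact Finset.card_le_card hsub
  have heq : S'.card = maxIntegralCard (2 * n) m := le_antisymm hS'le hle
  rw [← heq, hcardS']
  exact dvd_mul_left _ _
end

section
/- For every positive integer m and all coprime positive integers a and b, one has I(a·b, m) = I(a,m) · I(b,m). -/
theorem maxIntegralCard_mul_of_coprime (m a b : ℕ) (hm : 0 < m)
    (ha : 0 < a) (hb : 0 < b) (hab : Nat.Coprime a b) :
    maxIntegralCard (a * b) m = maxIntegralCard a m * maxIntegralCard b m := by
  haveI : NeZero a := ⟨ha.ne'⟩
  haveI : NeZero b := ⟨hb.ne'⟩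
  haveI : NeZero (a * b) := ⟨by positivity⟩
  set φ := ZMod.chineseRemainder hab with hφdef
  set P : ℕ → Set ℕ := fun n => {k : ℕ | ∃ S : Finset (Fin m → ZMod n),
    (∀ u ∈ S, ∀ v ∈ S, IntegralDistance n u v) ∧ S.card = k} with hP
  have hne : ∀ n : ℕ, (P n).Nonempty := by
    intro n
    exact ⟨0, ∅, by simp⟩
  have hbdd : ∀ n : ℕ, [NeZero n] → BddAbove (P n) := by
    intro n _
    refine ⟨Fintype.card (Fin m → ZMod n), ?_⟩
    rintro k ⟨S, -, rfl⟩
    exact Finset.card_le_univ S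
  -- key: integral distance mod a*b iff both components
  have key : ∀ u v : Fin m → ZMod (a * b),
      IntegralDistance (a * b) u v ↔
      (IntegralDistance a (fun i => (φ (u i)).1) (fun i => (φ (v i)).1) ∧
       IntegralDistance b (fun i => (φ (u i)).2) (fun i => (φ (v i)).2)) := by
    intro u v
    constructor
    · rintro ⟨d, hd⟩
      constructor
      · refine ⟨(φ d).1, ?_⟩
        have := congrArg (fun x => (φ x).1) hd
        simpa [map_sum, map_sub, map_pow, Prod.fst_sum] using this
      · refine ⟨(φ d).2, ?_⟩
        have := congrArg (fun x => (φ x).2) hd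
        simpa [map_sum, map_sub, map_pow, Prod.snd_sum] using this
    · rintro ⟨⟨d1, h1⟩, ⟨d2, h2⟩⟩
      refine ⟨φ.symm (d1, d2), ?_⟩
      apply φ.injective
      rw [map_pow, RingEquiv.apply_symm_apply]
      ext
      · simpa [map_sum, map_sub, map_pow, Prod.fst_sum] using h1
      · simpa [map_sum, map_sub, map_pow, Prod.snd_sum] using h2
  apply le_antisymm
  · -- sSup (P (a*b)) ≤ product
    apply csSup_le (hne _)
    rintro k ⟨S, hS, rfl⟩
    set Sa : Finset (Fin m → ZMod a) := S.image (fun u i => (φ (u i)).1) with hSa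
    set Sb : Finset (Fin m → ZMod b) := S.image (fun u i => (φ (u i)).2) with hSb
    have hcard : S.card ≤ Sa.card * Sb.card := by
      rw [← Finset.card_product]
      apply Finset.card_le_card_of_injOn
        (fun u => ((fun i => (φ (u i)).1), (fun i => (φ (u i)).2)))
      · intro u hu
        simp only [Finset.mem_product]
        exact Finset.mem_product.2 ⟨Finset.mem_image_of_mem _ hu, Finset.mem_image_of_mem _ hu⟩
      · intro u _ v _ h
        simp only [Prod.mk.injEq] at h
        funext i
        apply φ.injective
        ext
        · exact congrFun h.1 i
        · exact congrFun h.2 i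
    have hSa_mem : Sa.card ∈ P a := by
      refine ⟨Sa, ?_, rfl⟩
      intro u hu v hv
      simp only [hSa, Finset.mem_image] at hu hv
      obtain ⟨u', hu', rfl⟩ := hu
      obtain ⟨v', hv', rfl⟩ := hv
      exact ((key u' v').1 (hS u' hu' v' hv')).1
    have hSb_mem : Sb.card ∈ P b := by
      refine ⟨Sb, ?_, rfl⟩
      intro u hu v hv
      simp only [hSb, Finset.mem_image] at hu hv
      obtain ⟨u', hu', rfl⟩ := hu
      obtain ⟨v', hv', rfl⟩ := hv
      exact ((key u' v').1 (hS u' hu' v' hv')).2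
    calc S.card ≤ Sa.card * Sb.card := hcard
      _ ≤ sSup (P a) * sSup (P b) :=
        Nat.mul_le_mul (le_csSup (hbdd a) hSa_mem) (le_csSup (hbdd b) hSb_mem)
  · -- product ≤ sSup (P (a*b))
    obtain ⟨Sa, hSa, hSacard⟩ := Nat.sSup_mem (hne a) (hbdd a)
    obtain ⟨Sb, hSb, hSbcard⟩ := Nat.sSup_mem (hne b) (hbdd b)
    set F : (Fin m → ZMod a) × (Fin m → ZMod b) → (Fin m → ZMod (a * b)) :=
      fun p i => φ.symm (p.1 i, p.2 i) with hF
    have hFinj : Function.Injective F := by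
      intro p q h
      have : ∀ i, (p.1 i, p.2 i) = (q.1 i, q.2 i) := fun i =>
        φ.symm.injective (congrFun h i)
      ext i
      · exact congrArg Prod.fst (this i)
      · exact congrArg Prod.snd (this i)
    have hmem : (Sa.card * Sb.card) ∈ P (a * b) := by
      refine ⟨(Sa ×ˢ Sb).image F, ?_, ?_⟩
      · intro u hu v hv
        simp only [Finset.mem_image, Finset.mem_product] at hu hv
        obtain ⟨p, ⟨hp1, hp2⟩, rfl⟩ := hu
        obtain ⟨q, ⟨hq1, hq2⟩, rfl⟩ := hv
        rw [key]
        constructor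
        · simpa [hF, RingEquiv.apply_symm_apply] using hSa _ hp1 _ hq1
        · simpa [hF, RingEquiv.apply_symm_apply] using hSb _ hp2 _ hq2
      · rw [Finset.card_image_of_injective _ hFinj, Finset.card_product]
    have := le_csSup (hbdd (a * b)) hmem
    rw [hSacard, hSbcard] at this
    exact this
end

section
/- Let n be a positive integer with prime factorization n = ∏_{i=1}^s p_i^{r_i} (pairwise distinct primes p_i), and let s(n) = ∏_{i=1}^s p_i^{⌊r_i/2⌋} (equivalently, s(n) is the largest positive integer whose square divides n). Then I(n,2) ≥ n · s(n); concretely, with k = ∏_{i=1}^s p_i^{⌈r_i/2⌉}, the set {(u, v·k) : u, v ∈ ℤ/nℤ} ⊆ (ℤ/nℤ)² has pairwise integral distances and cardinality n · s(n). -/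
theorem maxIntegralCard_lower_bound (n s k : ℕ) (hn : 0 < n)
    (hs : s ^ 2 ∣ n) (hmax : ∀ t : ℕ, 0 < t → t ^ 2 ∣ n → t ≤ s)
    (hk : s * k = n) :
    (∀ u ∈ {p : Fin 2 → ZMod n | ∃ x y : ZMod n, p = ![x, y * (k : ZMod n)]},
      ∀ v ∈ {p : Fin 2 → ZMod n | ∃ x y : ZMod n, p = ![x, y * (k : ZMod n)]},
        IntegralDistance n u v) ∧
    {p : Fin 2 → ZMod n | ∃ x y : ZMod n, p = ![x, y * (k : ZMod n)]}.ncard = n * s ∧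
    n * s ≤ maxIntegralCard n 2 := by
  haveI : NeZero n := ⟨hn.ne'⟩
  have hs0 : 0 < s := by
    rcases Nat.eq_zero_or_pos s with h | h
    · subst h; simp at hk; omega
    · exact h
  haveI : NeZero s := ⟨hs0.ne'⟩
  have hk0 : 0 < k := by
    rcases Nat.eq_zero_or_pos k with h | h
    · subst h; simp at hk; omega
    · exact h
  have hsk : s ∣ k := by
    have h1 : s * s ∣ s * k := by rw [hk]; simpa [pow_two] using hs
    exact (mul_dvd_mul_iff_left hs0.ne').mp h1
  have hnk2 : n ∣ k ^ 2 := by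
    obtain ⟨c, hc⟩ := hsk
    exact ⟨c, by rw [← hk, hc]; ring⟩
  have hk2 : (k : ZMod n) ^ 2 = 0 := by
    have := (ZMod.natCast_eq_zero_iff (k ^ 2) n).mpr hnk2
    push_cast at this
    exact this
  set T : Set (Fin 2 → ZMod n) :=
    {p : Fin 2 → ZMod n | ∃ x y : ZMod n, p = ![x, y * (k : ZMod n)]} with hT
  -- Part 1: pairwise integral distance
  have part1 : ∀ u ∈ T, ∀ v ∈ T, IntegralDistance n u v := by
    rintro u ⟨x₁, y₁, rfl⟩ v ⟨x₂, y₂, rfl⟩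
    refine ⟨x₁ - x₂, ?_⟩
    rw [Fin.sum_univ_two]
    simp only [Matrix.cons_val_zero, Matrix.cons_val_one, Matrix.head_cons]
    have : (y₁ * k - y₂ * k) ^ 2 = (y₁ - y₂) ^ 2 * (k : ZMod n) ^ 2 := by ring
    rw [this, hk2, mul_zero, add_zero]
  -- the parametrizing map
  set f : ZMod n × ZMod s → (Fin 2 → ZMod n) :=
    fun p => ![p.1, ((p.2.val : ℕ) : ZMod n) * (k : ZMod n)] with hf
  have hrange : T = Set.range f := by
    ext p
    constructor
    · rintro ⟨x, y, rfl⟩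
      refine ⟨(x, (y.val : ZMod s)), ?_⟩
      simp only [hf]
      have hy : ((y.val : ZMod s).val : ℕ) = y.val % s := ZMod.val_natCast _ _
      have hsplit : y.val * k = (y.val / s) * (s * k) + (y.val % s) * k := by
        nlinarith [Nat.div_add_mod y.val s]
      have key : y * (k : ZMod n) = (((y.val : ZMod s).val : ℕ) : ZMod n) * (k : ZMod n) := by
        rw [hy]
        have h0 : (s : ZMod n) * (k : ZMod n) = 0 := by
          rw [← Nat.cast_mul, hk, ZMod.natCast_self]
        calc y * (k : ZMod n) = ((y.val * k : ℕ) : ZMod n) := by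
              push_cast [ZMod.natCast_val, ZMod.cast_id]; ring
          _ = (((y.val / s) * (s * k) + (y.val % s) * k : ℕ) : ZMod n) := by rw [← hsplit]
          _ = ((y.val % s : ℕ) : ZMod n) * (k : ZMod n) := by
              push_cast
              rw [h0]
              ring
      rw [key]
    · rintro ⟨⟨x, y⟩, rfl⟩
      exact ⟨x, (y.val : ZMod n), rfl⟩
  have hinj : Function.Injective f := by
    rintro ⟨x₁, y₁⟩ ⟨x₂, y₂⟩ h
    simp only [hf] at h
    have h0 := congrFun h 0
    have h1 := congrFun h 1
    simp only [Matrix.cons_val_zero, Matrix.cons_val_one, Matrix.head_cons] at h0 h1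
    have h1' : ((y₁.val * k : ℕ) : ZMod n) = ((y₂.val * k : ℕ) : ZMod n) := by
      push_cast; exact h1
    have hb₁ : y₁.val * k < n := by
      have := y₁.val_lt
      calc y₁.val * k < s * k := by exact (Nat.mul_lt_mul_right hk0).mpr this
        _ = n := hk
    have hb₂ : y₂.val * k < n := by
      have := y₂.val_lt
      calc y₂.val * k < s * k := by exact (Nat.mul_lt_mul_right hk0).mpr this
        _ = n := hk
    have : y₁.val * k = y₂.val * k := by
      have := congrArg ZMod.val h1'
      rwa [ZMod.val_natCast_of_lt hb₁, ZMod.val_natCast_of_lt hb₂] at this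
    have : y₁.val = y₂.val := Nat.eq_of_mul_eq_mul_right hk0 this
    exact Prod.ext h0 (ZMod.val_injective _ this)
  have hcard : T.ncard = n * s := by
    rw [hrange, Set.ncard_eq_toFinset_card', Set.toFinset_range]
    rw [Finset.card_image_of_injective _ hinj]
    simp [ZMod.card]
  refine ⟨part1, hcard, ?_⟩
  -- Part 3
  have hfin : T.Finite := Set.toFinite T
  have hmem : n * s ∈ {c : ℕ | ∃ S : Finset (Fin 2 → ZMod n),
      (∀ u ∈ S, ∀ v ∈ S, IntegralDistance n u v) ∧ S.card = c} := by
    refine ⟨hfin.toFinset, ?_, ?_⟩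
    · intro u hu v hv
      exact part1 u (hfin.mem_toFinset.mp hu) v (hfin.mem_toFinset.mp hv)
    · rw [← Set.ncard_eq_toFinset_card T hfin]
      exact hcard
  refine le_csSup ⟨Fintype.card (Fin 2 → ZMod n), ?_⟩ hmem
  rintro c ⟨S, -, rfl⟩
  exact Finset.card_le_univ S
end

section
/- Let n ≡ 2 (mod 4) be a positive integer with prime factorization n = 2 · ∏_{i=2}^s p_i^{r_i} (pairwise distinct odd primes p_i), and let s(n) = ∏_{i=2}^s p_i^{⌊r_i/2⌋} (equivalently, s(n) is the largest positive integer whose square divides n). Then I(n,2) ≥ 2n · s(n); concretely, with k = ∏_{i=2}^s p_i^{⌈r_i/2⌉}, the set {(u, v·k) : u, v ∈ ℤ/nℤ} ⊆ (ℤ/nℤ)² has pairwise integral distances and cardinality 2n · s(n). -/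
theorem maxIntegralCard_lower_bound_two_mod_four (n s k : ℕ) (hn : 0 < n)
    (hn4 : n % 4 = 2)
    (hs : s ^ 2 ∣ n) (hmax : ∀ t : ℕ, 0 < t → t ^ 2 ∣ n → t ≤ s)
    (hk : 2 * (s * k) = n) :
    (∀ u ∈ {p : Fin 2 → ZMod n | ∃ x y : ZMod n, p = ![x, y * (k : ZMod n)]},
      ∀ v ∈ {p : Fin 2 → ZMod n | ∃ x y : ZMod n, p = ![x, y * (k : ZMod n)]},
        IntegralDistance n u v) ∧
    {p : Fin 2 → ZMod n | ∃ x y : ZMod n, p = ![x, y * (k : ZMod n)]}.ncard = 2 * n * s ∧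
    2 * n * s ≤ maxIntegralCard n 2 := by
  haveI : NeZero n := ⟨hn.ne'⟩
  set S : Set (Fin 2 → ZMod n) :=
    {p : Fin 2 → ZMod n | ∃ x y : ZMod n, p = ![x, y * (k : ZMod n)]} with hS
  -- basic numerology
  have hspos : 0 < s := by
    rcases Nat.eq_zero_or_pos s with h | h
    · exfalso; rw [h] at hs; simp at hs; omega
    · exact h
  have hkpos : 0 < k := by
    rcases Nat.eq_zero_or_pos k with h | h
    · exfalso; rw [h] at hk; omega
    · exact h
  have hsodd : ¬ 2 ∣ s := by
    intro ⟨t, ht⟩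
    have : 4 ∣ n := by
      rcases hs with ⟨w, hw⟩
      exact ⟨t ^ 2 * w, by rw [hw, ht]; ring⟩
    omega
  have hsk : s ∣ k := by
    have h2k : s ∣ 2 * k := by
      rcases hs with ⟨w, hw⟩
      have : s * (2 * k) = s * (s * w) := by nlinarith
      have := Nat.eq_of_mul_eq_mul_left hspos this
      exact ⟨w, this⟩
    have hcop : Nat.Coprime s 2 := ((Nat.prime_two.coprime_iff_not_dvd).mpr hsodd).symm
    exact hcop.dvd_of_dvd_mul_right (by rwa [mul_comm] at h2k)
  obtain ⟨j, hj⟩ := hsk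
  -- the key element x = n/2
  set q := n / 4 with hq
  have hn42 : n = 4 * q + 2 := by omega
  have hhalf : n / 2 = 2 * q + 1 := by omega
  set x : ZMod n := ((n / 2 : ℕ) : ZMod n) with hx
  have hx2 : x + x = 0 := by
    have : ((n / 2 : ℕ) : ZMod n) + ((n / 2 : ℕ) : ZMod n) = ((n / 2 + n / 2 : ℕ) : ZMod n) := by
      push_cast; ring
    rw [hx, this]
    have : n / 2 + n / 2 = n := by omega
    rw [this, ZMod.natCast_self]
  have hxx : x * x = x := by
    have hnat : (n / 2) * (n / 2) = n / 2 + q * n := by rw [hhalf, hn42]; ring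
    calc x * x = (((n / 2) * (n / 2) : ℕ) : ZMod n) := by rw [hx]; push_cast; ring
    _ = ((n / 2 + q * n : ℕ) : ZMod n) := by rw [hnat]
    _ = x + (q : ZMod n) * ((n : ℕ) : ZMod n) := by push_cast; ring
    _ = x := by rw [ZMod.natCast_self]; ring
  have h2x : (2 : ZMod n) * x = 0 := by rw [two_mul]; exact hx2
  -- c^2 * x = c * x for every c
  have hcxN : ∀ m : ℕ, ((m : ZMod n)) ^ 2 * x = (m : ZMod n) * x := by
    intro m
    induction m with
    | zero => simp
    | succ m ih =>
      push_cast
      calc ((m : ZMod n) + 1) ^ 2 * x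
          = (m : ZMod n) ^ 2 * x + (m : ZMod n) * ((2 : ZMod n) * x) + x := by ring
        _ = (m : ZMod n) * x + x := by rw [h2x, ih]; ring
        _ = ((m : ZMod n) + 1) * x := by ring
  have hcx : ∀ c : ZMod n, c ^ 2 * x = c * x := by
    intro c
    have : ((c.val : ℕ) : ZMod n) = c := by rw [ZMod.natCast_val, ZMod.cast_id]
    rw [← this]; exact hcxN c.val
  -- k^2 = j * x in ZMod n
  have hk2 : (k : ZMod n) ^ 2 = (j : ZMod n) * x := by
    have hnat : k ^ 2 = j * (n / 2) := by
      have hsk2 : s * k = n / 2 := by omega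
      calc k ^ 2 = (s * j) * k := by rw [hj]; ring
      _ = j * (s * k) := by ring
      _ = j * (n / 2) := by rw [hsk2]
    calc (k : ZMod n) ^ 2 = ((k ^ 2 : ℕ) : ZMod n) := by push_cast; ring
    _ = ((j * (n / 2) : ℕ) : ZMod n) := by rw [hnat]
    _ = (j : ZMod n) * x := by push_cast; rw [hx]
  -- Part 1 : pairwise integral distance
  have part1 : ∀ u ∈ S, ∀ v ∈ S, IntegralDistance n u v := by
    rintro u ⟨x1, y1, rfl⟩ v ⟨x2, y2, rfl⟩
    set a : ZMod n := x1 - x2 with ha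
    set e : ZMod n := (y1 - y2) ^ 2 * (j : ZMod n) with he
    refine ⟨a + e * x, ?_⟩
    have hsum : ∑ i : Fin 2, (![x1, y1 * (k : ZMod n)] i - ![x2, y2 * (k : ZMod n)] i) ^ 2
        = a ^ 2 + e * x := by
      rw [Fin.sum_univ_two]
      simp only [Matrix.cons_val_zero, Matrix.cons_val_one, Matrix.head_cons]
      have : (y1 * (k : ZMod n) - y2 * (k : ZMod n)) ^ 2
          = (y1 - y2) ^ 2 * (k : ZMod n) ^ 2 := by ring
      rw [this, hk2, ha, he]; ring
    rw [hsum]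
    have : (a + e * x) ^ 2 = a ^ 2 + a * ((2 : ZMod n) * x) * e + e ^ 2 * (x * x) := by ring
    rw [this, h2x, hxx, hcx e]
    ring
  -- Cardinality
  have hR : Set.range (fun y : ZMod n => y * (k : ZMod n))
      = (AddSubgroup.zmultiples ((k : ℕ) : ZMod n) : Set (ZMod n)) := by
    ext z
    constructor
    · rintro ⟨y, rfl⟩
      refine ⟨(y.val : ℤ), ?_⟩
      simp [zsmul_eq_mul]
    · rintro ⟨m, rfl⟩
      exact ⟨(m : ZMod n), by simp [zsmul_eq_mul]⟩
  set R : Set (ZMod n) := Set.range (fun y : ZMod n => y * (k : ZMod n)) with hRdef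
  have hcardR : Nat.card R = 2 * s := by
    have h1 : Nat.card R = addOrderOf ((k : ℕ) : ZMod n) := by
      rw [hR]
      exact Nat.card_zmultiples _
    rw [h1, ZMod.addOrderOf_coe k hn.ne']
    have hgcd : n.gcd k = k := Nat.gcd_eq_right ⟨2 * s, by rw [← hk]; ring⟩
    rw [hgcd]
    rw [← hk]
    rw [show 2 * (s * k) = (2 * s) * k by ring]
    exact Nat.mul_div_cancel _ hkpos
  have hSeq : S = {p : Fin 2 → ZMod n | p 1 ∈ R} := by
    ext p
    constructor
    · rintro ⟨x1, y1, rfl⟩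
      exact ⟨y1, rfl⟩
    · rintro ⟨y, hy⟩
      refine ⟨p 0, y, ?_⟩
      funext i
      fin_cases i
      · rfl
      · exact hy.symm
  have hequiv : S ≃ ZMod n × R := by
    rw [hSeq]
    exact
      { toFun := fun p => (p.1 0, ⟨p.1 1, p.2⟩)
        invFun := fun z => ⟨![z.1, z.2], by
          simp only [Set.mem_setOf_eq, Matrix.cons_val_one, Matrix.head_cons]
          exact z.2.2⟩
        left_inv := by
          rintro ⟨p, hp⟩
          apply Subtype.ext
          funext i
          fin_cases i <;> rfl
        right_inv := by rintro ⟨z1, z2⟩; rfl }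
  have part2 : S.ncard = 2 * n * s := by
    rw [← Nat.card_coe_set_eq, Nat.card_congr hequiv, Nat.card_prod, Nat.card_zmod, hcardR]
    ring
  refine ⟨part1, part2, ?_⟩
  -- Part 3 : lower bound on maxIntegralCard
  have hfin : S.Finite := Set.toFinite S
  have hmem : 2 * n * s ∈ {c : ℕ | ∃ T : Finset (Fin 2 → ZMod n),
      (∀ u ∈ T, ∀ v ∈ T, IntegralDistance n u v) ∧ T.card = c} := by
    refine ⟨hfin.toFinset, ?_, ?_⟩
    · intro u hu v hv
      exact part1 u (hfin.mem_toFinset.mp hu) v (hfin.mem_toFinset.mp hv)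
    · rw [← Set.ncard_eq_toFinset_card S hfin]
      exact part2
  have hbdd : BddAbove {c : ℕ | ∃ T : Finset (Fin 2 → ZMod n),
      (∀ u ∈ T, ∀ v ∈ T, IntegralDistance n u v) ∧ T.card = c} := by
    refine ⟨Fintype.card (Fin 2 → ZMod n), ?_⟩
    rintro c ⟨T, -, rfl⟩
    exact Finset.card_le_univ T
  exact le_csSup hbdd hmem
end

section
/- For every prime p ≥ 3, I(p²,2) = p³; that is, the maximum cardinality of a subset of (ℤ/p²ℤ)² whose points are pairwise at integral distance equals p³. -/
open Finset

section Basics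

variable {p : ℕ} [Fact p.Prime]

private lemma pp : p.Prime := Fact.out

instance : NeZero (p ^ 2) := ⟨pow_ne_zero 2 (pp (p := p)).ne_zero⟩

/-- reduction map -/
noncomputable def redu (p : ℕ) : ZMod (p ^ 2) →+* ZMod p :=
  ZMod.castHom (dvd_pow_self p two_ne_zero) (ZMod p)

lemma redu_eq (x : ZMod (p ^ 2)) : redu p x = (x.val : ZMod p) := by
  conv_lhs => rw [← ZMod.natCast_zmod_val x]
  rw [map_natCast]

lemma redu_eq_zero_iff (x : ZMod (p ^ 2)) : redu p x = 0 ↔ p ∣ x.val := by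
  rw [redu_eq, ZMod.natCast_eq_zero_iff]

lemma isUnit_of_redu_ne_zero {x : ZMod (p ^ 2)} (h : redu p x ≠ 0) : IsUnit x := by
  rw [← ZMod.natCast_zmod_val x]
  rw [ZMod.isUnit_iff_coprime]
  have : ¬ p ∣ x.val := by rwa [← redu_eq_zero_iff]
  exact Nat.Coprime.pow_right 2 ((Nat.coprime_comm.mp ((pp.coprime_iff_not_dvd).mpr this)))

lemma exists_p_mul_of_redu_eq_zero {x : ZMod (p ^ 2)} (h : redu p x = 0) :
    ∃ c : ZMod (p ^ 2), x = (p : ZMod (p ^ 2)) * c := by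
  rw [redu_eq_zero_iff] at h
  obtain ⟨c, hc⟩ := h
  refine ⟨(c : ZMod (p ^ 2)), ?_⟩
  rw [← Nat.cast_mul, ← hc, ZMod.natCast_zmod_val]

lemma p_sq_zero : ((p : ZMod (p ^ 2)))^2 = 0 := by
  rw [← Nat.cast_pow, ZMod.natCast_self]

/-- a square that reduces to zero is zero -/
lemma sq_eq_zero_of_redu {x d : ZMod (p ^ 2)} (hx : x = d ^ 2) (h : redu p x = 0) : x = 0 := by
  have hd : redu p d = 0 := by
    have : (redu p d)^2 = 0 := by rw [← map_pow, ← hx, h]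
    exact pow_eq_zero_iff (two_ne_zero) |>.mp this
  obtain ⟨c, hc⟩ := exists_p_mul_of_redu_eq_zero hd
  rw [hx, hc, mul_pow, p_sq_zero, zero_mul]

end Basics

set_option linter.unusedSectionVars false

section Fiber

variable {p : ℕ} [Fact p.Prime]

lemma val_div_lt (x : ZMod (p ^ 2)) : x.val / p < p := by
  have h := ZMod.val_lt x
  have hp : 0 < p := (pp (p := p)).pos
  rw [Nat.div_lt_iff_lt_mul hp]
  calc x.val < p ^ 2 := h
  _ = p * p := sq p

lemma eq_of_redu_eq_of_div_eq {x y : ZMod (p ^ 2)} (h1 : redu p x = redu p y)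
    (h2 : x.val / p = y.val / p) : x = y := by
  have hm : x.val % p = y.val % p := by
    have := congrArg ZMod.val h1
    rwa [redu_eq, redu_eq, ZMod.val_natCast, ZMod.val_natCast] at this
  have : x.val = y.val := by
    calc x.val = p * (x.val / p) + x.val % p := (Nat.div_add_mod x.val p).symm
    _ = p * (y.val / p) + y.val % p := by rw [h2, hm]
    _ = y.val := Nat.div_add_mod y.val p
  rw [← ZMod.natCast_zmod_val x, ← ZMod.natCast_zmod_val y, this]

lemma card_fiber_le (S : Finset (Fin 2 → ZMod (p ^ 2))) (r : Fin 2 → ZMod p) :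
    (S.filter (fun u => (fun j => redu p (u j)) = r)).card ≤ p ^ 2 := by
  have key : (S.filter (fun u => (fun j => redu p (u j)) = r)).card
      ≤ (Finset.univ : Finset (Fin p × Fin p)).card := by
    apply Finset.card_le_card_of_injOn
      (fun u => ((⟨(u 0).val / p, val_div_lt _⟩ : Fin p), (⟨(u 1).val / p, val_div_lt _⟩ : Fin p)))
      (fun _ _ => Finset.mem_univ _)
    intro u hu v hv huv
    simp only [Finset.mem_coe, Finset.mem_filter] at hu hv
    have hr : ∀ j, redu p (u j) = redu p (v j) := by
      intro j
      rw [congrFun hu.2 j, congrFun hv.2 j]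
    simp only [Prod.mk.injEq, Fin.mk.injEq] at huv
    funext j
    fin_cases j
    · exact eq_of_redu_eq_of_div_eq (hr 0) huv.1
    · exact eq_of_redu_eq_of_div_eq (hr 1) huv.2
  simpa [sq] using key

lemma card_le_image_mul (S : Finset (Fin 2 → ZMod (p ^ 2))) :
    S.card ≤ (S.image (fun u j => redu p (u j))).card * p ^ 2 := by
  rw [Finset.card_eq_sum_card_fiberwise
    (f := fun u j => redu p (u j)) (t := S.image (fun u j => redu p (u j)))
    (fun u hu => Finset.mem_image_of_mem _ hu)]
  calc ∑ r ∈ S.image (fun u j => redu p (u j)),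
      (S.filter (fun u => (fun j => redu p (u j)) = r)).card
      ≤ ∑ _r ∈ S.image (fun u j => redu p (u j)), p ^ 2 :=
        Finset.sum_le_sum (fun r _ => card_fiber_le S r)
    _ = (S.image (fun u j => redu p (u j))).card * p ^ 2 := by
        rw [Finset.sum_const, smul_eq_mul]

end Fiber

section Lower

variable {p : ℕ} [Fact p.Prime]

noncomputable def lowerSet (p : ℕ) [Fact p.Prime] : Finset (Fin 2 → ZMod (p ^ 2)) :=
  Finset.image
    (fun x : ZMod (p ^ 2) × Fin p => ![x.1, (p : ZMod (p ^ 2)) * ((x.2 : ℕ) : ZMod (p ^ 2))])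
    Finset.univ

lemma lowerSet_inj : Function.Injective
    (fun x : ZMod (p ^ 2) × Fin p => ![x.1, (p : ZMod (p ^ 2)) * ((x.2 : ℕ) : ZMod (p ^ 2))]) := by
  intro a b hab
  have h0 := congrFun hab 0
  have h1 := congrFun hab 1
  simp only [Matrix.cons_val_zero, Matrix.cons_val_one, Matrix.head_cons] at h0 h1
  have hpk : ∀ k : Fin p, (p : ZMod (p ^ 2)) * ((k : ℕ) : ZMod (p ^ 2)) = ((p * k : ℕ) : ZMod (p ^ 2)) := by
    intro k; push_cast; ring
  rw [hpk, hpk] at h1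
  have hlt : ∀ k : Fin p, p * (k : ℕ) < p ^ 2 := by
    intro k
    calc p * (k : ℕ) < p * p := Nat.mul_lt_mul_of_le_of_lt (le_refl p) k.isLt (pp (p := p)).pos
    _ = p ^ 2 := (sq p).symm
  have := congrArg ZMod.val h1
  rw [ZMod.val_cast_of_lt (hlt a.2), ZMod.val_cast_of_lt (hlt b.2)] at this
  have h2 : a.2 = b.2 := by
    apply Fin.ext
    exact Nat.eq_of_mul_eq_mul_left (pp (p := p)).pos this
  exact Prod.ext h0 h2

lemma lowerSet_card : (lowerSet p).card = p ^ 3 := by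
  rw [lowerSet, Finset.card_image_of_injective _ lowerSet_inj, Finset.card_univ,
    Fintype.card_prod, ZMod.card, Fintype.card_fin]
  ring

lemma lowerSet_clique : ∀ u ∈ lowerSet p, ∀ v ∈ lowerSet p,
    ∃ d : ZMod (p ^ 2), ∑ i, (u i - v i) ^ 2 = d ^ 2 := by
  intro u hu v hv
  simp only [lowerSet, Finset.mem_image, Finset.mem_univ, true_and] at hu hv
  obtain ⟨a, rfl⟩ := hu
  obtain ⟨b, rfl⟩ := hv
  refine ⟨a.1 - b.1, ?_⟩
  rw [Fin.sum_univ_two]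
  simp only [Matrix.cons_val_zero, Matrix.cons_val_one, Matrix.head_cons]
  have h1 : ((p : ZMod (p ^ 2)) * ((a.2 : ℕ) : ZMod (p ^ 2))
      - (p : ZMod (p ^ 2)) * ((b.2 : ℕ) : ZMod (p ^ 2))) ^ 2
      = (p : ZMod (p ^ 2)) ^ 2 * (((a.2 : ℕ) : ZMod (p ^ 2)) - ((b.2 : ℕ) : ZMod (p ^ 2))) ^ 2 := by
    ring
  rw [h1, p_sq_zero, zero_mul, add_zero]

end Lower

section CaseOne

variable {p : ℕ} [Fact p.Prime]

lemma pow_p_eq_neg_one (hodd : Odd p) (c : ZMod (p ^ 2)) :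
    (-1 + (p : ZMod (p ^ 2)) * c) ^ p = -1 := by
  have hy2 : ((p : ZMod (p ^ 2)) * c) ^ 2 = 0 := by
    rw [mul_pow, p_sq_zero, zero_mul]
  rw [add_pow, Finset.sum_eq_single p]
  · simp [Odd.neg_one_pow hodd]
  · intro k hk hkp
    rw [Finset.mem_range] at hk
    by_cases h2 : 2 ≤ p - k
    · have hz : ((p : ZMod (p ^ 2)) * c) ^ (p - k) = 0 := by
        have he : p - k = 2 + (p - k - 2) := by omega
        rw [he, pow_add, hy2, zero_mul]
      rw [hz, mul_zero, zero_mul]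
    · have hk1 : p - k = 1 := by omega
      have hkpm : k = p - 1 := by omega
      have hch : (p.choose k) = p := by
        have hp1 : 1 ≤ p := (pp (p := p)).one_lt.le.trans' (by omega)
        rw [hkpm, ← Nat.choose_symm (Nat.sub_le p 1)]
        have : p - (p - 1) = 1 := by omega
        rw [this, Nat.choose_one_right]
      rw [hk1, hch, pow_one]
      have : (-1 : ZMod (p ^ 2)) ^ k * ((p : ZMod (p ^ 2)) * c) * (p : ZMod (p ^ 2))
          = (-1 : ZMod (p ^ 2)) ^ k * c * ((p : ZMod (p ^ 2)) ^ 2) := by ring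
      rw [this, p_sq_zero, mul_zero]
  · intro h
    exact absurd (Finset.self_mem_range_succ p) h

lemma exists_I (h4 : p % 4 = 1) : ∃ I : ZMod (p ^ 2), I ^ 2 = -1 := by
  have hsq : IsSquare (-1 : ZMod p) := (ZMod.exists_sq_eq_neg_one_iff).mpr (by omega)
  obtain ⟨j, hj⟩ := hsq
  set a : ZMod (p ^ 2) := ((j.val : ℕ) : ZMod (p ^ 2)) with ha
  have hra : redu p a = j := by
    rw [ha, map_natCast, ZMod.natCast_zmod_val]
  have hz : redu p (a ^ 2 + 1) = 0 := by
    rw [map_add, map_pow, hra, map_one]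
    rw [sq, ← hj]
    ring
  obtain ⟨c, hc⟩ := exists_p_mul_of_redu_eq_zero hz
  have ha2 : a ^ 2 = -1 + (p : ZMod (p ^ 2)) * c := by
    rw [← hc]; ring
  refine ⟨a ^ p, ?_⟩
  have hodd : Odd p := by
    rcases Nat.Prime.eq_two_or_odd' (pp (p := p)) with h | h
    · omega
    · exact h
  calc (a ^ p) ^ 2 = (a ^ 2) ^ p := by rw [← pow_mul, ← pow_mul, mul_comm]
  _ = -1 := by rw [ha2]; exact pow_p_eq_neg_one hodd c

end CaseOne

section CaseOneMain

variable {p : ℕ} [Fact p.Prime]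

/-- Row bound: in a set of pairs with pairwise products of coordinate differences being
squares, each "row" (fixed residue of the second coordinate) has at most `p ^ 2` elements. -/
lemma row_bound (S' : Finset (ZMod (p ^ 2) × ZMod (p ^ 2)))
    (hS' : ∀ w ∈ S', ∀ w' ∈ S', ∃ d : ZMod (p ^ 2), (w.1 - w'.1) * (w.2 - w'.2) = d ^ 2)
    (b : ZMod p) :
    (S'.filter (fun w => redu p w.2 = b)).card ≤ p ^ 2 := by
  set T := S'.filter (fun w => redu p w.2 = b) with hT
  -- the key constraint
  have key : ∀ w ∈ T, ∀ w' ∈ T, redu p w.1 ≠ redu p w'.1 → w.2 = w'.2 := by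
    intro w hw w' hw' hne
    rw [hT, Finset.mem_filter] at hw hw'
    obtain ⟨d, hd⟩ := hS' w hw.1 w' hw'.1
    have hs0 : redu p ((w.1 - w'.1) * (w.2 - w'.2)) = 0 := by
      rw [map_mul, map_sub, map_sub, hw.2, hw'.2, sub_self, mul_zero]
    have hzero : (w.1 - w'.1) * (w.2 - w'.2) = 0 := sq_eq_zero_of_redu hd hs0
    have hunit : IsUnit (w.1 - w'.1) := by
      apply isUnit_of_redu_ne_zero
      rw [map_sub]
      exact sub_ne_zero.mpr hne
    have := hunit.mul_right_eq_zero.mp hzero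
    exact sub_eq_zero.mp this
  by_cases hcrowd : ∀ w ∈ T, ∀ w' ∈ T, redu p w.1 = redu p w'.1
  · -- single residue class: inject into Fin p × Fin p
    have hcard : T.card ≤ (Finset.univ : Finset (Fin p × Fin p)).card := by
      apply Finset.card_le_card_of_injOn
        (fun w => ((⟨w.1.val / p, val_div_lt _⟩ : Fin p), (⟨w.2.val / p, val_div_lt _⟩ : Fin p)))
        (fun _ _ => Finset.mem_univ _)
      intro w hw w' hw' hww
      simp only [Finset.mem_coe] at hw hw'
      simp only [Prod.mk.injEq, Fin.mk.injEq] at hww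
      have h2 : redu p w.2 = redu p w'.2 := by
        rw [hT, Finset.mem_filter] at hw hw'
        rw [hw.2, hw'.2]
      exact Prod.ext (eq_of_redu_eq_of_div_eq (hcrowd w hw w' hw') hww.1)
        (eq_of_redu_eq_of_div_eq h2 hww.2)
    simpa [sq] using hcard
  · -- second coordinate is constant: inject into ZMod (p^2)
    push_neg at hcrowd
    obtain ⟨w₀, hw₀, w₁, hw₁, hne⟩ := hcrowd
    have hconst : ∀ w ∈ T, w.2 = w₀.2 := by
      intro w hw
      by_cases h : redu p w.1 = redu p w₀.1
      · have : redu p w.1 ≠ redu p w₁.1 := by rw [h]; exact hne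
        rw [key w hw w₁ hw₁ this, ← key w₀ hw₀ w₁ hw₁ hne]
      · exact key w hw w₀ hw₀ h
    have hcard : T.card ≤ (Finset.univ : Finset (ZMod (p ^ 2))).card := by
      apply Finset.card_le_card_of_injOn (fun w => w.1) (fun _ _ => Finset.mem_univ _)
      intro w hw w' hw' hww
      simp only [Finset.mem_coe] at hw hw'
      have := (hconst w hw).trans (hconst w' hw').symm
      exact Prod.ext hww this
    simpa using hcard

lemma upper_case1 (h4 : p % 4 = 1) (S : Finset (Fin 2 → ZMod (p ^ 2)))
    (hS : ∀ u ∈ S, ∀ v ∈ S, ∃ d : ZMod (p ^ 2), ∑ i, (u i - v i) ^ 2 = d ^ 2) :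
    S.card ≤ p ^ 3 := by
  obtain ⟨I, hI⟩ := exists_I h4
  have hIunit : IsUnit I := by
    apply IsUnit.of_mul_eq_one (-I)
    have : I * -I = -(I ^ 2) := by ring
    rw [this, hI, neg_neg]
  have h2unit : IsUnit (2 : ZMod (p ^ 2)) := by
    apply isUnit_of_redu_ne_zero
    rw [map_ofNat]
    intro h
    have : ((2 : ℕ) : ZMod p) = 0 := by exact_mod_cast h
    rw [ZMod.natCast_eq_zero_iff] at this
    have := Nat.le_of_dvd (by norm_num) this
    have hp2 := (pp (p := p)).two_le
    omega
  set ψ : (Fin 2 → ZMod (p ^ 2)) → ZMod (p ^ 2) × ZMod (p ^ 2) :=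
    fun u => (u 0 + I * u 1, u 0 - I * u 1) with hψ
  have hψinj : Function.Injective ψ := by
    intro u v huv
    rw [hψ, Prod.mk.injEq] at huv
    have hsum : (2 : ZMod (p ^ 2)) * u 0 = 2 * v 0 := by
      have := congrArg₂ (· + ·) huv.1 huv.2
      linear_combination this
    have hdiff : I * ((2 : ZMod (p ^ 2)) * u 1) = I * (2 * v 1) := by
      have := congrArg₂ (· - ·) huv.1 huv.2
      linear_combination this
    have h0 : u 0 = v 0 := h2unit.mul_left_cancel hsum
    have h1 : u 1 = v 1 := h2unit.mul_left_cancel (hIunit.mul_left_cancel hdiff)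
    funext j
    fin_cases j <;> assumption
  set S' := S.image ψ with hS'def
  have hcardeq : S'.card = S.card := Finset.card_image_of_injective S hψinj
  have hS' : ∀ w ∈ S', ∀ w' ∈ S', ∃ d : ZMod (p ^ 2), (w.1 - w'.1) * (w.2 - w'.2) = d ^ 2 := by
    intro w hw w' hw'
    rw [hS'def, Finset.mem_image] at hw hw'
    obtain ⟨u, hu, rfl⟩ := hw
    obtain ⟨v, hv, rfl⟩ := hw'
    obtain ⟨d, hd⟩ := hS u hu v hv
    refine ⟨d, ?_⟩
    rw [← hd, Fin.sum_univ_two, hψ]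
    simp only
    linear_combination (-(u 1 - v 1) ^ 2) * hI
  -- decompose by rows
  rw [← hcardeq]
  rw [Finset.card_eq_sum_card_fiberwise
    (f := fun w => redu p w.2) (t := S'.image (fun w => redu p w.2))
    (fun w hw => Finset.mem_image_of_mem _ hw)]
  calc ∑ b ∈ S'.image (fun w => redu p w.2), (S'.filter (fun w => redu p w.2 = b)).card
      ≤ ∑ _b ∈ S'.image (fun w => redu p w.2), p ^ 2 :=
        Finset.sum_le_sum (fun b _ => row_bound S' hS' b)
    _ = (S'.image (fun w => redu p w.2)).card * p ^ 2 := by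
        rw [Finset.sum_const, smul_eq_mul]
    _ ≤ p * p ^ 2 := by
        apply Nat.mul_le_mul_right
        calc (S'.image (fun w => redu p w.2)).card ≤ Fintype.card (ZMod p) :=
              Finset.card_le_univ _
        _ = p := ZMod.card p
    _ = p ^ 3 := by ring

end CaseOneMain

section Paley

variable {K : Type*} [Field K] [Fintype K] [DecidableEq K]

lemma char_shift_sum (hK : ringChar K ≠ 2) {a : K} (ha : a ≠ 0) :
    ∑ x : K, quadraticChar K x * quadraticChar K (x + a) = -1 := by
  have h1 : ∑ x : K, quadraticChar K x * quadraticChar K (x + a)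
      = ∑ x ∈ Finset.univ.erase (0 : K), quadraticChar K x * quadraticChar K (x + a) := by
    rw [Finset.sum_erase]
    rw [quadraticChar_zero, zero_mul]
  rw [h1]
  have h2 : ∀ x ∈ Finset.univ.erase (0 : K),
      quadraticChar K x * quadraticChar K (x + a) = quadraticChar K (1 + a * x⁻¹) := by
    intro x hx
    have hx0 : x ≠ 0 := Finset.ne_of_mem_erase hx
    have : x + a = x * (1 + a * x⁻¹) := by field_simp
    rw [this, map_mul, ← mul_assoc, ← sq, quadraticChar_sq_one hx0, one_mul]
  rw [Finset.sum_congr rfl h2]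
  have h3 : ∑ x ∈ Finset.univ.erase (0 : K), quadraticChar K (1 + a * x⁻¹)
      = ∑ z ∈ Finset.univ.erase (1 : K), quadraticChar K z := by
    apply Finset.sum_nbij' (fun x => 1 + a * x⁻¹) (fun z => a * (z - 1)⁻¹)
    · intro x hx
      have hx0 : x ≠ 0 := Finset.ne_of_mem_erase hx
      apply Finset.mem_erase.mpr
      constructor
      · intro h
        have : a * x⁻¹ = 0 := by linear_combination h
        rcases mul_eq_zero.mp this with h' | h'
        · exact ha h'
        · exact hx0 (inv_eq_zero.mp h')
      · exact Finset.mem_univ _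
    · intro z hz
      have hz1 : z ≠ 1 := Finset.ne_of_mem_erase hz
      apply Finset.mem_erase.mpr
      refine ⟨?_, Finset.mem_univ _⟩
      intro h
      rcases mul_eq_zero.mp h with h' | h'
      · exact ha h'
      · exact hz1 (by
          have := inv_eq_zero.mp h'
          have : z = 1 := by linear_combination this
          exact this)
    · intro x hx
      have hx0 : x ≠ 0 := Finset.ne_of_mem_erase hx
      field_simp
      simp [ha]
    · intro z hz
      have hz1 : z ≠ 1 := Finset.ne_of_mem_erase hz
      have : z - 1 ≠ 0 := sub_ne_zero.mpr hz1
      field_simp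
      ring
    · intro x hx
      rfl
  rw [h3, Finset.sum_erase_eq_sub (Finset.mem_univ (1 : K)),
    quadraticChar_sum_zero hK, map_one]
  ring

lemma paley_clique_bound (hK : ringChar K ≠ 2) {q : ℕ} (hq : Fintype.card K = q ^ 2)
    (C : Finset K) (hC : ∀ u ∈ C, ∀ v ∈ C, u ≠ v → IsSquare (u - v)) : C.card ≤ q := by
  by_contra hn
  push_neg at hn
  set n := C.card with hnn
  -- the big character sum
  set f : K → ℤ := fun x => ∑ c ∈ C, quadraticChar K (x - c) with hf
  have diag : ∀ c : K, ∑ x : K, quadraticChar K (x - c) * quadraticChar K (x - c)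
      = (Fintype.card K : ℤ) - 1 := by
    intro c
    have : ∀ x : K, quadraticChar K (x - c) * quadraticChar K (x - c)
        = if x = c then 0 else 1 := by
      intro x
      by_cases h : x = c
      · simp [h]
      · have : x - c ≠ 0 := sub_ne_zero.mpr h
        rw [← sq, quadraticChar_sq_one this]
        simp [h]
    rw [Finset.sum_congr rfl (fun x _ => this x)]
    have h4 : ∀ x : K, (if x = c then (0:ℤ) else 1) = 1 - (if x = c then 1 else 0) := by
      intro x; by_cases h : x = c <;> simp [h]
    rw [Finset.sum_congr rfl (fun x _ => h4 x), Finset.sum_sub_distrib,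
      Finset.sum_ite_eq' Finset.univ c (fun _ => (1:ℤ)), if_pos (Finset.mem_univ c)]
    simp
  have offdiag : ∀ c c' : K, c ≠ c' →
      ∑ x : K, quadraticChar K (x - c) * quadraticChar K (x - c') = -1 := by
    intro c c' hcc
    have := char_shift_sum (K := K) hK (a := c' - c) (sub_ne_zero.mpr (Ne.symm hcc))
    calc ∑ x : K, quadraticChar K (x - c) * quadraticChar K (x - c')
        = ∑ y : K, quadraticChar K (y + (c' - c)) * quadraticChar K y := by
          apply Finset.sum_nbij' (fun x => x - c') (fun y => y + c')
            (fun _ _ => Finset.mem_univ _) (fun _ _ => Finset.mem_univ _)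
          · intro x _; ring
          · intro y _; ring
          · intro x _
            congr 1 <;> ring
      _ = -1 := by
          rw [← this]
          apply Finset.sum_congr rfl
          intro y _
          ring
  have upper : ∑ x : K, (f x) ^ 2 = n * ((Fintype.card K : ℤ) - n) := by
    have expand : ∀ x : K, (f x) ^ 2
        = ∑ c ∈ C, ∑ c' ∈ C, quadraticChar K (x - c) * quadraticChar K (x - c') := by
      intro x
      rw [hf, sq, Finset.sum_mul_sum]
    rw [Finset.sum_congr rfl (fun x _ => expand x), Finset.sum_comm]
    have swap2 : ∀ c ∈ C, ∑ x : K, ∑ c' ∈ C,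
        quadraticChar K (x - c) * quadraticChar K (x - c')
        = ∑ c' ∈ C, ∑ x : K, quadraticChar K (x - c) * quadraticChar K (x - c') :=
      fun c _ => Finset.sum_comm
    rw [Finset.sum_congr rfl swap2]
    have inner : ∀ c ∈ C, (∑ c' ∈ C,
        ∑ x : K, quadraticChar K (x - c) * quadraticChar K (x - c'))
        = (Fintype.card K : ℤ) - n := by
      intro c hc
      have hsplit : ∀ c' ∈ C, (∑ x : K, quadraticChar K (x - c) * quadraticChar K (x - c'))
          = (if c' = c then ((Fintype.card K : ℤ) - 1) + 1 else 0) + (-1) := by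
        intro c' _
        by_cases h : c' = c
        · subst h
          rw [diag c', if_pos rfl]
          ring
        · rw [offdiag c c' (Ne.symm h), if_neg h]
          ring
      rw [Finset.sum_congr rfl hsplit, Finset.sum_add_distrib,
        Finset.sum_ite_eq' C c (fun _ => ((Fintype.card K : ℤ) - 1) + 1), if_pos hc,
        Finset.sum_const]
      simp only [nsmul_eq_mul, mul_neg_one]
      rw [← hnn]
      ring
    rw [Finset.sum_congr rfl inner, Finset.sum_const, ← hnn]
    simp only [nsmul_eq_mul]
  have lower : (n : ℤ) * ((n : ℤ) - 1) ^ 2 ≤ ∑ x : K, (f x) ^ 2 := by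
    have hsub : ∑ x ∈ C, (f x) ^ 2 ≤ ∑ x : K, (f x) ^ 2 :=
      Finset.sum_le_sum_of_subset_of_nonneg (Finset.subset_univ C)
        (fun x _ _ => sq_nonneg (f x))
    have hfx : ∀ x ∈ C, f x = (n : ℤ) - 1 := by
      intro x hx
      have : ∀ c ∈ C, quadraticChar K (x - c) = 1 - (if c = x then 1 else 0) := by
        intro c hc
        by_cases h : c = x
        · simp [h]
        · rw [if_neg h]
          have hne : x ≠ c := Ne.symm h
          rw [(quadraticChar_one_iff_isSquare (sub_ne_zero.mpr hne)).mpr (hC x hx c hc hne)]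
          ring
      rw [hf]
      simp only
      rw [Finset.sum_congr rfl this, Finset.sum_sub_distrib,
        Finset.sum_ite_eq' C x (fun _ => (1:ℤ)), if_pos hx, Finset.sum_const, ← hnn]
      simp only [nsmul_eq_mul]
      ring
    calc (n : ℤ) * ((n : ℤ) - 1) ^ 2 = ∑ _x ∈ C, ((n : ℤ) - 1) ^ 2 := by
          rw [Finset.sum_const, ← hnn]
          simp only [nsmul_eq_mul]
      _ = ∑ x ∈ C, (f x) ^ 2 := by
          apply Finset.sum_congr rfl
          intro x hx
          rw [hfx x hx]
      _ ≤ ∑ x : K, (f x) ^ 2 := hsub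
  rw [upper, hq] at lower
  push_cast at lower
  have hN : (q : ℤ) + 1 ≤ (n : ℤ) := by exact_mod_cast hn
  have hQ0 : (0 : ℤ) ≤ (q : ℤ) := Int.natCast_nonneg q
  have hN0 : (0 : ℤ) < (n : ℤ) := by linarith
  have hcancel : ((n:ℤ) - 1) ^ 2 ≤ (q:ℤ) ^ 2 - n :=
    le_of_mul_le_mul_left (by linarith [lower]) hN0
  have hsq : (q:ℤ) * q ≤ ((n:ℤ) - 1) * ((n:ℤ) - 1) :=
    mul_self_le_mul_self hQ0 (by linarith)
  nlinarith [hcancel, hsq, hN0]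

end Paley

section CaseThree

variable {p : ℕ} [Fact p.Prime]

set_option maxHeartbeats 1000000 in
lemma residue_paley_bound {K : Type*} [Field K] [Fintype K] [DecidableEq K]
    [Algebra (ZMod p) K]
    (hcard : Fintype.card K = p ^ 2) (h4 : p % 4 = 3)
    (T : Finset (Fin 2 → ZMod p))
    (hT : ∀ r ∈ T, ∀ r' ∈ T, IsSquare ((r 0 - r' 0) ^ 2 + (r 1 - r' 1) ^ 2)) :
    T.card ≤ p := by
  haveI : CharP K p := charP_of_injective_algebraMap ((algebraMap (ZMod p) K).injective) p
  have hp2 : p ≠ 2 := by omega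
  have hchar : ringChar K = p := ringChar.eq K p
  have hchar2 : ringChar K ≠ 2 := by rw [hchar]; exact hp2
  -- square root of -1 in K
  have hsqneg : IsSquare (-1 : K) := by
    apply FiniteField.isSquare_neg_one_iff.mpr
    rw [hcard, Nat.pow_mod, h4]
    norm_num
  obtain ⟨i, hi⟩ := hsqneg
  have hi2 : i ^ 2 = -1 := by rw [sq, ← hi]
  set alg : ZMod p →+* K := algebraMap (ZMod p) K with halg
  have two_var_inj : ∀ x y : ZMod p, alg x + alg y * i = 0 → x = 0 ∧ y = 0 := by
    intro x y hxy
    by_cases hy : y = 0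
    · subst hy
      rw [map_zero, zero_mul, add_zero] at hxy
      exact ⟨by rwa [map_eq_zero] at hxy, rfl⟩
    · exfalso
      have hyK : alg y ≠ 0 := fun h => hy (by rwa [map_eq_zero] at h)
      have hieq : i = alg (-x * y⁻¹) := by
        rw [map_mul, map_neg, map_inv₀]
        field_simp
        linear_combination hxy
      have h2 : alg ((-x * y⁻¹) ^ 2) = alg (-1) := by
        rw [map_pow, ← hieq, hi2, map_neg, map_one]
      have hc : (-x * y⁻¹) ^ 2 = -1 := alg.injective h2
      have : IsSquare (-1 : ZMod p) := ⟨-x * y⁻¹, by rw [← hc]; ring⟩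
      rw [ZMod.exists_sq_eq_neg_one_iff] at this
      omega
  -- Frobenius on i
  have hip : i ^ p = -i := by
    have hexp : 2 * ((p - 1) / 2) + 1 = p := by omega
    have h1 : i ^ p = (i ^ 2) ^ ((p - 1) / 2) * i := by
      rw [← pow_mul, ← pow_succ, hexp]
    have hodd2 : Odd ((p - 1) / 2) := Nat.odd_iff.mpr (by omega)
    rw [hi2, Odd.neg_one_pow hodd2] at h1
    rw [h1]
    ring
  -- main embedding properties
  have hzp : ∀ x y : ZMod p, (alg x + alg y * i) ^ p = alg x - alg y * i := by
    intro x y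
    rw [add_pow_char, mul_pow, hip, ← map_pow, ← map_pow, ZMod.pow_card, ZMod.pow_card]
    ring
  have hnorm : ∀ x y : ZMod p,
      (alg x + alg y * i) * ((alg x + alg y * i) ^ p) = alg (x ^ 2 + y ^ 2) := by
    intro x y
    rw [hzp, map_add, map_pow, map_pow]
    linear_combination (-(alg y) ^ 2) * hi2
  have hkey : ∀ x y : ZMod p, ¬(x = 0 ∧ y = 0) → IsSquare (x ^ 2 + y ^ 2) →
      IsSquare (alg x + alg y * i) := by
    intro x y hxy hsq
    set z := alg x + alg y * i with hz
    have hz0 : z ≠ 0 := fun h => hxy (two_var_inj x y h)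
    set Q : ZMod p := x ^ 2 + y ^ 2 with hQ
    have hq0 : Q ≠ 0 := by
      intro h
      apply hz0
      have hzp1 : z ^ (p + 1) = 0 := by
        rw [pow_succ, mul_comm (z ^ p) z]
        rw [hnorm, ← hQ, h, map_zero]
      exact pow_eq_zero_iff (by omega) |>.mp hzp1
    obtain ⟨c, hc⟩ := hsq
    have hc0 : c ≠ 0 := by
      intro h
      rw [h, mul_zero] at hc
      exact hq0 hc
    set m := (p - 1) / 2 with hm
    have hpm : p = 2 * m + 1 := by omega
    have hdiv : p ^ 2 / 2 = (p + 1) * m := by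
      have h1 : p ^ 2 = 2 * ((p + 1) * m) + 1 := by rw [hpm]; ring
      omega
    rw [FiniteField.isSquare_iff hchar2 hz0, hcard, hdiv]
    have hz1 : z ^ (p + 1) = alg Q := by
      rw [pow_succ, mul_comm (z ^ p) z]
      rw [hnorm]
    rw [pow_mul, hz1, ← map_pow]
    have hQm : Q ^ m = 1 := by
      rw [hc, ← sq, ← pow_mul]
      have h2m : 2 * m = p - 1 := by omega
      rw [h2m]
      exact ZMod.pow_card_sub_one_eq_one hc0
    rw [hQm, map_one]
  -- Paley embedding
  set e : (Fin 2 → ZMod p) → K := fun r => alg (r 0) + alg (r 1) * i with he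
  have heinj : Function.Injective e := by
    intro r r' hrr
    have hzero : alg (r 0 - r' 0) + alg (r 1 - r' 1) * i = 0 := by
      rw [map_sub, map_sub]
      rw [he] at hrr
      simp only at hrr
      linear_combination hrr
    obtain ⟨h0, h1⟩ := two_var_inj _ _ hzero
    funext j
    fin_cases j
    · exact sub_eq_zero.mp h0
    · exact sub_eq_zero.mp h1
  set C := T.image e with hC
  have hclique : ∀ zu ∈ C, ∀ zv ∈ C, zu ≠ zv → IsSquare (zu - zv) := by
    intro zu hzu zv hzv hne
    rw [hC, Finset.mem_image] at hzu hzv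
    obtain ⟨r, hr, rfl⟩ := hzu
    obtain ⟨r', hr', rfl⟩ := hzv
    have hdiff : e r - e r' = alg (r 0 - r' 0) + alg (r 1 - r' 1) * i := by
      rw [he, map_sub, map_sub]
      simp only
      ring
    rw [hdiff]
    apply hkey
    · intro ⟨h0, h1⟩
      apply hne
      congr 1
      funext j
      fin_cases j
      · exact sub_eq_zero.mp h0
      · exact sub_eq_zero.mp h1
    · exact hT r hr r' hr'
  have := paley_clique_bound hchar2 hcard C hclique
  rwa [hC, Finset.card_image_of_injective _ heinj] at this

set_option maxHeartbeats 1000000 in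
lemma upper_case3 (h4 : p % 4 = 3) (S : Finset (Fin 2 → ZMod (p ^ 2)))
    (hS : ∀ u ∈ S, ∀ v ∈ S, ∃ d : ZMod (p ^ 2), ∑ i, (u i - v i) ^ 2 = d ^ 2) :
    S.card ≤ p ^ 3 := by
  classical
  set T := S.image (fun u j => redu p (u j)) with hT
  have hTsq : ∀ r ∈ T, ∀ r' ∈ T, IsSquare ((r 0 - r' 0) ^ 2 + (r 1 - r' 1) ^ 2) := by
    intro r hr r' hr'
    rw [hT, Finset.mem_image] at hr hr'
    obtain ⟨u, hu, rfl⟩ := hr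
    obtain ⟨v, hv, rfl⟩ := hr'
    obtain ⟨d, hd⟩ := hS u hu v hv
    refine ⟨redu p d, ?_⟩
    have hcong := congrArg (redu p) hd
    rw [map_sum] at hcong
    rw [Fin.sum_univ_two] at hcong
    simp only [map_pow, map_sub] at hcong
    rw [hcong]
    ring
  have hTcard : T.card ≤ p := by
    letI : Fintype (GaloisField p 2) := Fintype.ofFinite _
    letI : DecidableEq (GaloisField p 2) := Classical.decEq _
    have hcard : Fintype.card (GaloisField p 2) = p ^ 2 := by
      have := GaloisField.card p 2 (by norm_num)
      rwa [Nat.card_eq_fintype_card] at this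
    exact residue_paley_bound (K := GaloisField p 2) hcard h4 T hTsq
  calc S.card ≤ T.card * p ^ 2 := card_le_image_mul S
    _ ≤ p * p ^ 2 := Nat.mul_le_mul_right _ hTcard
    _ = p ^ 3 := by ring

end CaseThree


theorem maxIntegralCard_prime_sq_plane (p : ℕ) (hp : p.Prime) (hp3 : 3 ≤ p) :
    maxIntegralCard (p ^ 2) 2 = p ^ 3 := by
  haveI : Fact p.Prime := ⟨hp⟩
  have hodd : p % 2 = 1 := by
    rcases hp.eq_two_or_odd with h | h
    · omega
    · exact h
  apply le_antisymm
  · apply csSup_le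
    · exact ⟨0, ∅, fun u hu => absurd hu (Finset.notMem_empty u), rfl⟩
    · rintro k ⟨S, hS, rfl⟩
      have hS' : ∀ u ∈ S, ∀ v ∈ S, ∃ d : ZMod (p ^ 2), ∑ i, (u i - v i) ^ 2 = d ^ 2 :=
        fun u hu v hv => hS u hu v hv
      rcases (by omega : p % 4 = 1 ∨ p % 4 = 3) with h | h
      · exact upper_case1 h S hS'
      · exact upper_case3 h S hS'
  · apply le_csSup
    · refine ⟨Fintype.card (Fin 2 → ZMod (p ^ 2)), ?_⟩
      rintro k ⟨S, _, rfl⟩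
      exact (Finset.card_le_univ S).trans (le_of_eq Finset.card_univ)
    · exact ⟨lowerSet p, fun u hu v hv => lowerSet_clique u hu v hv, lowerSet_card⟩
end

section
/- Let p be a prime with p ≡ 1 (mod 4) and let ω ∈ ℤ/pℤ satisfy ω² = −1. Let □_p = {i² : i ∈ ℤ/pℤ} be the set of squares of ℤ/pℤ, and let P = {(q, ω·q) : q ∈ □_p} ∪ {(q, −ω·q) : q ∈ □_p} ⊆ (ℤ/pℤ)². Then P has pairwise integral distances, P has cardinality exactly p, and the points of P are not collinear. -/
/-- Two points `u, v ∈ (ℤ/nℤ)²` are at integral distance if there exists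
`d ∈ ℤ/nℤ` with `(u₁ - v₁)² + (u₂ - v₂)² = d²`. -/
def IntegralDistance2 (n : ℕ) (u v : ZMod n × ZMod n) : Prop :=
  ∃ d : ZMod n, (u.1 - v.1) ^ 2 + (u.2 - v.2) ^ 2 = d ^ 2

/-- A set of points of `(ℤ/nℤ)²` is collinear if there are `a, b, t₁, t₂ ∈ ℤ/nℤ`
such that every point of the set has the form `(a + w·t₁, b + w·t₂)` for some `w`. -/
def SetCollinear (n : ℕ) (P : Set (ZMod n × ZMod n)) : Prop :=
  ∃ a b t₁ t₂ : ZMod n, ∀ x ∈ P, ∃ w : ZMod n, x.1 = a + w * t₁ ∧ x.2 = b + w * t₂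


lemma two_mul_card_squares (p : ℕ) [Fact p.Prime] (hp2 : p ≠ 2) :
    2 * (Finset.univ.image (fun i : ZMod p => i ^ 2)).card = p + 1 := by
  classical
  set S := Finset.univ.image (fun i : ZMod p => i ^ 2) with hS
  have h0 : (0 : ZMod p) ∈ S := by
    simp only [hS, Finset.mem_image, Finset.mem_univ, true_and]
    exact ⟨0, by ring⟩
  have hchar : (2 : ZMod p) ≠ 0 := by
    intro h
    have h2 : ((2 : ℕ) : ZMod p) = 0 := by exact_mod_cast h
    have hd := (ZMod.natCast_eq_zero_iff 2 p).mp h2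
    have := Nat.le_of_dvd (by norm_num) hd
    have := (Fact.out : p.Prime).two_le
    omega
  have hcard : (Finset.univ : Finset (ZMod p)).card =
      ∑ b ∈ S, (Finset.univ.filter (fun a : ZMod p => a ^ 2 = b)).card :=
    Finset.card_eq_sum_card_image _ _
  have hfib0 : (Finset.univ.filter (fun a : ZMod p => a ^ 2 = 0)).card = 1 := by
    have : (Finset.univ.filter (fun a : ZMod p => a ^ 2 = 0)) = {0} := by
      ext a; simp [pow_eq_zero_iff]
    rw [this]; simp
  have hfib : ∀ b ∈ S, b ≠ 0 →
      (Finset.univ.filter (fun a : ZMod p => a ^ 2 = b)).card = 2 := by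
    intro b hb hbne
    simp only [hS, Finset.mem_image, Finset.mem_univ, true_and] at hb
    obtain ⟨i, hi⟩ := hb
    have hi0 : i ≠ 0 := by rintro rfl; simp at hi; exact hbne hi.symm
    have : (Finset.univ.filter (fun a : ZMod p => a ^ 2 = b)) = {i, -i} := by
      ext a
      simp only [Finset.mem_filter, Finset.mem_univ, true_and, Finset.mem_insert,
        Finset.mem_singleton]
      constructor
      · intro ha
        have : (a - i) * (a + i) = 0 := by linear_combination ha - hi
        rcases mul_eq_zero.mp this with h | h
        · left; exact sub_eq_zero.mp h
        · right; linear_combination h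
      · rintro (rfl | rfl)
        · exact hi
        · rw [← hi]; ring
    rw [this]
    rw [Finset.card_insert_of_notMem, Finset.card_singleton]
    simp only [Finset.mem_singleton]
    intro h
    apply hi0
    have : (2 : ZMod p) * i = 0 := by linear_combination h
    rcases mul_eq_zero.mp this with h' | h'
    · exact absurd h' hchar
    · exact h'
  have hsum : ∑ b ∈ S, (Finset.univ.filter (fun a : ZMod p => a ^ 2 = b)).card
      = 2 * (S.card - 1) + 1 := by
    rw [← Finset.add_sum_erase _ _ h0, hfib0]
    rw [Finset.sum_congr rfl (fun b hb => hfib b (Finset.mem_of_mem_erase hb)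
      (Finset.ne_of_mem_erase hb))]
    rw [Finset.sum_const, Finset.card_erase_of_mem h0, smul_eq_mul]
    omega
  have hp1 : 1 ≤ S.card := Finset.card_pos.mpr ⟨0, h0⟩
  have huniv : (Finset.univ : Finset (ZMod p)).card = p := by
    haveI : NeZero p := ⟨(Fact.out : p.Prime).ne_zero⟩
    simp [ZMod.card]
  omega

theorem integral_point_set_of_omega (p : ℕ) (hp : p.Prime) (hp4 : p % 4 = 1)
    (ω : ZMod p) (hω : ω ^ 2 = -1) :
    (∀ u ∈ ((fun q : ZMod p => (q, ω * q)) '' {x | ∃ i : ZMod p, x = i ^ 2} ∪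
            (fun q : ZMod p => (q, -ω * q)) '' {x | ∃ i : ZMod p, x = i ^ 2}),
      ∀ v ∈ ((fun q : ZMod p => (q, ω * q)) '' {x | ∃ i : ZMod p, x = i ^ 2} ∪
            (fun q : ZMod p => (q, -ω * q)) '' {x | ∃ i : ZMod p, x = i ^ 2}),
        IntegralDistance2 p u v) ∧
    ((fun q : ZMod p => (q, ω * q)) '' {x | ∃ i : ZMod p, x = i ^ 2} ∪
      (fun q : ZMod p => (q, -ω * q)) '' {x | ∃ i : ZMod p, x = i ^ 2}).ncard = p ∧
    ¬ SetCollinear p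
      ((fun q : ZMod p => (q, ω * q)) '' {x | ∃ i : ZMod p, x = i ^ 2} ∪
        (fun q : ZMod p => (q, -ω * q)) '' {x | ∃ i : ZMod p, x = i ^ 2}) := by
  haveI : Fact p.Prime := ⟨hp⟩
  set Sq : Set (ZMod p) := {x | ∃ i : ZMod p, x = i ^ 2} with hSq
  set L1 := (fun q : ZMod p => (q, ω * q)) '' Sq with hL1
  set L2 := (fun q : ZMod p => (q, -ω * q)) '' Sq with hL2
  have hp2 : p ≠ 2 := by omega
  have hchar : (2 : ZMod p) ≠ 0 := by
    intro h
    have h2 : ((2 : ℕ) : ZMod p) = 0 := by exact_mod_cast h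
    have hd := (ZMod.natCast_eq_zero_iff 2 p).mp h2
    have := Nat.le_of_dvd (by norm_num) hd
    have := hp.two_le
    omega
  have hω0 : ω ≠ 0 := by
    intro h; rw [h] at hω; simp at hω
  -- intersection
  have hinter : L1 ∩ L2 = {((0 : ZMod p), (0 : ZMod p))} := by
    ext ⟨x, y⟩
    constructor
    · rintro ⟨⟨q, hq, hq1⟩, ⟨r, hr, hr1⟩⟩
      simp only [Prod.mk.injEq] at hq1 hr1
      obtain ⟨h1, h2⟩ := hq1
      obtain ⟨h3, h4⟩ := hr1
      have hqr : q = r := by rw [h1, h3]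
      have : (2 : ZMod p) * ω * q = 0 := by
        subst hqr
        linear_combination h2 - h4
      have hq0 : q = 0 := by
        rcases mul_eq_zero.mp this with h | h
        · rcases mul_eq_zero.mp h with h' | h'
          · exact absurd h' hchar
          · exact absurd h' hω0
        · exact h
      simp [← h1, ← h2, hq0]
    · rintro h
      simp only [Set.mem_singleton_iff, Prod.mk.injEq] at h
      obtain ⟨rfl, rfl⟩ := h
      constructor
      · exact ⟨0, ⟨0, by ring⟩, by simp⟩
      · exact ⟨0, ⟨0, by ring⟩, by simp⟩
  -- cardinalities
  have hScoe : Sq = ↑(Finset.univ.image (fun i : ZMod p => i ^ 2)) := by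
    ext x; simp [hSq, eq_comm]
  have hSqcard : 2 * Sq.ncard = p + 1 := by
    rw [hScoe, Set.ncard_coe_finset]
    exact two_mul_card_squares p hp2
  have hinj1 : Function.Injective (fun q : ZMod p => (q, ω * q)) :=
    fun a b h => (Prod.ext_iff.mp h).1
  have hinj2 : Function.Injective (fun q : ZMod p => (q, -ω * q)) :=
    fun a b h => (Prod.ext_iff.mp h).1
  have hc1 : L1.ncard = Sq.ncard := Set.ncard_image_of_injective _ hinj1
  have hc2 : L2.ncard = Sq.ncard := Set.ncard_image_of_injective _ hinj2
  have hUcard : (L1 ∪ L2).ncard = p := by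
    have h := Set.ncard_union_add_ncard_inter L1 L2 (Set.toFinite _) (Set.toFinite _)
    rw [hinter, hc1, hc2, Set.ncard_singleton] at h
    omega
  refine ⟨?_, hUcard, ?_⟩
  · rintro u (⟨q, ⟨i, hi⟩, rfl⟩ | ⟨q, ⟨i, hi⟩, rfl⟩) v (⟨r, ⟨j, hj⟩, rfl⟩ | ⟨r, ⟨j, hj⟩, rfl⟩) <;>
      subst hi hj
    · exact ⟨0, by linear_combination (i ^ 2 - j ^ 2) ^ 2 * hω⟩
    · exact ⟨2 * ω * i * j, by linear_combination (i ^ 2 - j ^ 2) ^ 2 * hω⟩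
    · exact ⟨2 * ω * i * j, by linear_combination (i ^ 2 - j ^ 2) ^ 2 * hω⟩
    · exact ⟨0, by linear_combination (i ^ 2 - j ^ 2) ^ 2 * hω⟩
  · rintro ⟨a, b, t1, t2, h⟩
    have h00 : ((0 : ZMod p), (0 : ZMod p)) ∈ L1 ∪ L2 :=
      Or.inl ⟨0, ⟨0, by ring⟩, by simp⟩
    have h1 : ((1 : ZMod p), ω) ∈ L1 ∪ L2 :=
      Or.inl ⟨1, ⟨1, by ring⟩, by simp⟩
    have h2 : ((1 : ZMod p), -ω) ∈ L1 ∪ L2 :=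
      Or.inr ⟨1, ⟨1, by ring⟩, by simp⟩
    obtain ⟨w0, e01, e02⟩ := h _ h00
    obtain ⟨w1, e11, e12⟩ := h _ h1
    obtain ⟨w2, e21, e22⟩ := h _ h2
    simp only at e01 e02 e11 e12 e21 e22
    have hw : w1 ≠ w2 := by
      intro h'
      subst h'
      have : (2 : ZMod p) * ω = 0 := by linear_combination e12 - e22
      rcases mul_eq_zero.mp this with h' | h'
      · exact hchar h'
      · exact hω0 h'
    have ht1 : t1 = 0 := by
      have hz : (w1 - w2) * t1 = 0 := by linear_combination e21 - e11
      rcases mul_eq_zero.mp hz with h' | h'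
      · exact absurd h' (sub_ne_zero.mpr hw)
      · exact h'
    have : (1 : ZMod p) = 0 := by
      rw [ht1] at e11 e01
      linear_combination e11 - e01
    exact one_ne_zero this
end

section
/- Let p be a prime with p ≡ 3 (mod 4). Then every subset of (ℤ/pℤ)² of cardinality p whose points are pairwise at integral distance is collinear. -/
open Polynomial Finset

section Machinery

variable {K : Type*} [CommRing K]

noncomputable def phiH : K[X] →+* Polynomial (Polynomial K) :=
  eval₂RingHom (Polynomial.C.comp Polynomial.C) Polynomial.X

lemma phiH_coeff (q : K[X]) (i : ℕ) : (phiH q).coeff i = Polynomial.C (q.coeff i) := by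
  induction q using Polynomial.induction_on' with
  | add f g hf hg => simp [hf, hg]
  | monomial n a =>
      rw [phiH, coe_eval₂RingHom, eval₂_monomial]
      simp only [RingHom.coe_comp, Function.comp_apply, coeff_monomial]
      rw [coeff_C_mul, coeff_X_pow]
      by_cases h : i = n
      · subst h; simp
      · rw [if_neg h, mul_zero, if_neg fun h' => h h'.symm, map_zero]

noncomputable def sigH : Polynomial (Polynomial K) →+* Polynomial (Polynomial K) :=
  eval₂RingHom phiH (Polynomial.X * Polynomial.C Polynomial.X)

lemma sigH_coeff (A : Polynomial (Polynomial K)) (n k : ℕ) (hk : k ≤ n) :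
    ((sigH A).coeff n).coeff k = (A.coeff k).coeff (n - k) := by
  induction A using Polynomial.induction_on' with
  | add f g hf hg => simp [hf, hg]
  | monomial j q =>
      rw [sigH, coe_eval₂RingHom, eval₂_monomial, mul_pow, ← Polynomial.C_pow,
        mul_comm (Polynomial.X ^ j), ← mul_assoc, coeff_mul_X_pow']
      by_cases hj : j ≤ n
      · rw [if_pos hj, coeff_mul_C, phiH_coeff, coeff_monomial]
        by_cases h : k = j
        · subst h
          rw [if_pos rfl, coeff_C_mul, coeff_X_pow, if_pos rfl, mul_one]
        · rw [if_neg fun h' => h h'.symm]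
          simp [coeff_C_mul, coeff_X_pow, h]
      · rw [if_neg hj, coeff_monomial, if_neg (by omega)]
        simp

end Machinery

section FF

variable {K : Type*} [Field K] [Fintype K]

lemma monic_Xq_sub_X : (X ^ (Fintype.card K) - X : K[X]).Monic := by
  apply monic_X_pow_sub
  refine lt_of_le_of_lt degree_X_le ?_
  exact_mod_cast (Nat.one_lt_cast (α := WithBot ℕ)).2 Fintype.one_lt_card

lemma prod_X_sub_C_univ [DecidableEq K] : (∏ a : K, (X - C a)) = X ^ (Fintype.card K) - X := by
  have hsp : Splits (X ^ (Fintype.card K) - X : K[X]) := by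
    rw [splits_iff_card_roots, FiniteField.roots_X_pow_card_sub_X]
    simp [(monic_Xq_sub_X (K := K)).natDegree_eq_zero,
      FiniteField.X_pow_card_sub_X_natDegree_eq K Fintype.one_lt_card]
  have h := hsp.eq_prod_roots_of_monic (monic_Xq_sub_X (K := K))
  rw [FiniteField.roots_X_pow_card_sub_X] at h
  rw [h]
  rfl

lemma prod_X_add_C_univ [DecidableEq K] : (∏ a : K, (X + C a)) = X ^ (Fintype.card K) - X := by
  rw [← prod_X_sub_C_univ]
  rw [← Equiv.prod_comp (Equiv.neg K) (fun y => X - C y)]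
  refine Finset.prod_congr rfl fun x _ => ?_
  simp [sub_eq_add_neg]

lemma squarefree_Xq_sub_X : Squarefree (X ^ (Fintype.card K) - X : K[X]) := by
  intro d hd
  obtain ⟨e, he⟩ := hd
  have hder : Polynomial.derivative (X ^ (Fintype.card K) - X : K[X]) = -1 := by
    rw [map_sub, Polynomial.derivative_X_pow, Polynomial.derivative_X]
    have : ((Fintype.card K : K)) = 0 := by
      exact_mod_cast FiniteField.cast_card_eq_zero K
    rw [this]
    simp
  have hdvd : d ∣ Polynomial.derivative (X ^ (Fintype.card K) - X : K[X]) := by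
    rw [he, derivative_mul, derivative_mul]
    exact dvd_add
      (dvd_mul_of_dvd_left
        (dvd_add (dvd_mul_left d (Polynomial.derivative d)) (dvd_mul_right d (Polynomial.derivative d))) e)
      (dvd_mul_of_dvd_left (dvd_mul_right d d) (Polynomial.derivative e))
  rw [hder] at hdvd
  exact isUnit_of_dvd_unit hdvd isUnit_one.neg

end FF

theorem redei_core (p : ℕ) [Fact p.Prime] (hp3 : 3 ≤ p)
    (f : ZMod p → ZMod p) (NS : Finset (ZMod p)) (hNS : (p - 1) / 2 ≤ NS.card)
    (hinj : ∀ c ∈ NS, Function.Injective fun x : ZMod p => f x - c * x) :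
    ∃ c₀ γ : ZMod p, ∀ x, f x = c₀ * x + γ := by
  have hprime : p.Prime := Fact.out
  have hodd : p % 2 = 1 := Nat.odd_iff.mp (hprime.odd_of_ne_two (by omega))
  set m : ℕ := (p - 1) / 2 with hm_def
  have hm : p = 2 * m + 1 := by omega
  have hm1 : 1 ≤ m := by omega
  have hcardK : Fintype.card (ZMod p) = p := ZMod.card p
  set H : Polynomial (Polynomial (ZMod p)) :=
    ∏ x : ZMod p, (Polynomial.X + Polynomial.C (Polynomial.X * Polynomial.C x - Polynomial.C (f x))) with hH_def
  set Fc : ZMod p → Polynomial (ZMod p) :=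
    fun c => ∏ x : ZMod p, (Polynomial.X - Polynomial.C (f x - c * x)) with hFc_def
  have h_map : ∀ c : ZMod p, H.map (evalRingHom c) = Fc c := by
    intro c
    rw [hH_def, Polynomial.map_prod]
    refine Finset.prod_congr rfl fun x _ => ?_
    have hev : evalRingHom c (Polynomial.X * Polynomial.C x - Polynomial.C (f x))
        = c * x - f x := by
      simp only [coe_evalRingHom, eval_sub, eval_mul, eval_X, eval_C]
    rw [Polynomial.map_add, Polynomial.map_X, Polynomial.map_C, hev,
      show (f x - c * x) = -(c * x - f x) by ring, map_neg, sub_neg_eq_add]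
  have hσH : sigH H = ∏ x : ZMod p,
      (Polynomial.X * Polynomial.C (Polynomial.X + Polynomial.C x)
        - Polynomial.C (Polynomial.C (f x))) := by
    rw [hH_def, map_prod]
    refine Finset.prod_congr rfl fun x _ => ?_
    rw [sigH, coe_eval₂RingHom, eval₂_add, eval₂_X, eval₂_C]
    have hphi : phiH (Polynomial.X * Polynomial.C x - Polynomial.C (f x))
        = Polynomial.X * Polynomial.C (Polynomial.C x)
          - Polynomial.C (Polynomial.C (f x)) := by
      rw [phiH, coe_eval₂RingHom, eval₂_sub, eval₂_mul, eval₂_X, eval₂_C, eval₂_C]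
      rfl
    rw [hphi, map_add]
    ring
  have hfactor_deg : ∀ x : ZMod p,
      (Polynomial.X * Polynomial.C (Polynomial.X + Polynomial.C x)
        - Polynomial.C (Polynomial.C (f x))).natDegree ≤ 1 := by
    intro x
    refine le_trans (natDegree_sub_le _ _) ?_
    simp only [max_le_iff, natDegree_C, Nat.zero_le, and_true]
    refine le_trans (natDegree_mul_le) ?_
    simp
  have hdegσ : (sigH H).natDegree ≤ p := by
    rw [hσH]
    refine le_trans (natDegree_prod_le _ _) ?_
    refine le_trans (Finset.sum_le_card_nsmul _ _ 1 fun x _ => hfactor_deg x) ?_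
    simp [hcardK]
  have hcoeffp : (sigH H).coeff p = Polynomial.X ^ p - Polynomial.X := by
    rw [hσH]
    have hcp := coeff_prod_of_natDegree_le (s := (Finset.univ : Finset (ZMod p)))
      (fun x => Polynomial.X * Polynomial.C (Polynomial.X + Polynomial.C x)
        - Polynomial.C (Polynomial.C (f x))) 1 (fun x _ => hfactor_deg x)
    rw [Finset.card_univ, hcardK, mul_one] at hcp
    rw [hcp]
    have heach : ∀ x : ZMod p,
        (Polynomial.X * Polynomial.C (Polynomial.X + Polynomial.C x)
          - Polynomial.C (Polynomial.C (f x))).coeff 1 = Polynomial.X + Polynomial.C x := by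
      intro x
      rw [coeff_sub, coeff_C, if_neg one_ne_zero, sub_zero, mul_comm, coeff_C_mul,
        coeff_X_one, mul_one]
    rw [Finset.prod_congr rfl fun x _ => heach x, prod_X_add_C_univ, hcardK]
  have hAcoeff : ∀ j i : ℕ, 1 ≤ j → j ≤ p - 2 → j ≤ i → (H.coeff (p - j)).coeff i = 0 := by
    intro j i hj1 hj2 hji
    have hkn : p - j ≤ (p - j) + i := Nat.le_add_right _ _
    have hs := sigH_coeff H ((p - j) + i) (p - j) hkn
    rw [Nat.add_sub_cancel_left] at hs
    rw [← hs]
    rcases lt_or_eq_of_le hji with hlt | heq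
    · have hbig : p < (p - j) + i := by omega
      rw [coeff_eq_zero_of_natDegree_lt (lt_of_le_of_lt hdegσ hbig), coeff_zero]
    · subst heq
      have hpj : (p - j) + j = p := by omega
      rw [hpj, hcoeffp, coeff_sub, coeff_X_pow, if_neg (by omega), coeff_X, if_neg (by omega),
        sub_zero]
  have hAdeg : ∀ j : ℕ, 1 ≤ j → j ≤ p - 2 → (H.coeff (p - j)).natDegree ≤ j - 1 := by
    intro j hj1 hj2
    rw [natDegree_le_iff_coeff_eq_zero]
    intro N hN
    exact hAcoeff j N hj1 hj2 (by omega)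
  have hFc_eval : ∀ c ∈ NS, Fc c = Polynomial.X ^ p - Polynomial.X := by
    intro c hc
    have hbij : Function.Bijective (fun x : ZMod p => f x - c * x) :=
      (Fintype.bijective_iff_injective_and_card _).2 ⟨hinj c hc, rfl⟩
    rw [hFc_def]
    calc (∏ x : ZMod p, (Polynomial.X - Polynomial.C (f x - c * x)))
        = ∏ y : ZMod p, (Polynomial.X - Polynomial.C y) :=
          Fintype.prod_bijective _ hbij _ _ (fun x => rfl)
      _ = Polynomial.X ^ p - Polynomial.X := by rw [prod_X_sub_C_univ, hcardK]
  have hAzero : ∀ j : ℕ, 1 ≤ j → j ≤ m → H.coeff (p - j) = 0 := by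
    intro j hj1 hjm
    refine eq_zero_of_natDegree_lt_card_of_eval_eq_zero' _ NS ?_ ?_
    · intro c hc
      have hc' : Polynomial.eval c (H.coeff (p - j)) = (H.map (evalRingHom c)).coeff (p - j) := by
        rw [Polynomial.coeff_map]
        rfl
      rw [hc', h_map c, hFc_eval c hc, coeff_sub, coeff_X_pow, if_neg (by omega), coeff_X,
        if_neg (by omega), sub_zero]
    · exact lt_of_le_of_lt (hAdeg j hj1 (by omega)) (by omega)
  set c₀ : ZMod p := f 1 - f 0 with hc₀_def
  set v : ZMod p → ZMod p := fun x => f x - c₀ * x with hv_def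
  have hv01 : v 1 = v 0 := by rw [hv_def]; simp only [hc₀_def]; ring
  set F₀ : Polynomial (ZMod p) := Fc c₀ with hF₀_def
  have hF₀_prod : F₀ = ∏ x : ZMod p, (Polynomial.X - Polynomial.C (v x)) := by
    rw [hF₀_def, hFc_def]
  have hF₀_monic : F₀.Monic := by
    rw [hF₀_prod]; exact monic_prod_of_monic _ _ fun x _ => monic_X_sub_C _
  have hF₀_deg : F₀.natDegree = p := by
    rw [hF₀_prod, natDegree_prod_of_monic _ _ fun x _ => monic_X_sub_C _]
    simp [natDegree_X_sub_C, hcardK]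
  have hF₀_coeff : ∀ j : ℕ, 1 ≤ j → j ≤ m → F₀.coeff (p - j) = 0 := by
    intro j hj1 hjm
    have h1 : F₀ = H.map (evalRingHom c₀) := (h_map c₀).symm
    rw [h1, Polynomial.coeff_map, hAzero j hj1 hjm]
    simp
  have hF₀_eval : ∀ x : ZMod p, F₀.eval (v x) = 0 := by
    intro x
    rw [hF₀_prod, eval_prod]
    refine Finset.prod_eq_zero (Finset.mem_univ x) ?_
    simp
  set G : Polynomial (ZMod p) := F₀ - (Polynomial.X ^ p - Polynomial.X) with hG_def
  have hG_coeff_zero : ∀ k : ℕ, m < k → G.coeff k = 0 := by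
    intro k hk
    rw [hG_def, coeff_sub, coeff_sub, coeff_X_pow, coeff_X]
    rcases lt_trichotomy k p with hkp | hkp | hkp
    · have hF : F₀.coeff k = 0 := by
        rw [show k = p - (p - k) from by omega]
        exact hF₀_coeff (p - k) (by omega) (by omega)
      rw [hF, if_neg (by omega), if_neg (by omega)]
      ring
    · subst hkp
      have hF : F₀.coeff k = 1 := by
        have h2 := hF₀_monic.coeff_natDegree
        rwa [hF₀_deg] at h2
      rw [hF, if_pos rfl, if_neg (by omega)]
      ring
    · rw [coeff_eq_zero_of_natDegree_lt (by omega : F₀.natDegree < k), if_neg (by omega),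
        if_neg (by omega)]
      ring
  have hG_deg : G.natDegree ≤ m := by
    rw [natDegree_le_iff_coeff_eq_zero]
    intro N hN
    exact hG_coeff_zero N hN
  have hG_ne : G ≠ 0 := by
    intro h0
    have hF₀X : F₀ = Polynomial.X ^ p - Polynomial.X := by
      have h1 : F₀ - (Polynomial.X ^ p - Polynomial.X) = 0 := by rw [← hG_def, h0]
      exact sub_eq_zero.mp h1
    have hdvd : (Polynomial.X - Polynomial.C (v 0)) * (Polynomial.X - Polynomial.C (v 0)) ∣ F₀ := by
      rw [hF₀_prod]
      have hsub : ({0, 1} : Finset (ZMod p)) ⊆ Finset.univ := Finset.subset_univ _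
      have hd := Finset.prod_dvd_prod_of_subset _ _
        (fun x : ZMod p => Polynomial.X - Polynomial.C (v x)) hsub
      rwa [Finset.prod_pair (show (0 : ZMod p) ≠ 1 from fun h => one_ne_zero h.symm), hv01] at hd
    have hsf := squarefree_Xq_sub_X (K := ZMod p)
    rw [hcardK] at hsf
    exact (Polynomial.not_isUnit_X_sub_C (v 0)) (hsf _ (hF₀X ▸ hdvd))
  have hderivF : Polynomial.derivative F₀ = Polynomial.derivative G - 1 := by
    rw [hG_def, map_sub, map_sub, Polynomial.derivative_X_pow, Polynomial.derivative_X,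
      ZMod.natCast_self p]
    simp
  by_cases hD : Polynomial.derivative F₀ = 0
  · -- linear case
    have hdG : Polynomial.derivative G = 1 := by
      have h1 := hderivF
      rw [hD] at h1
      exact sub_eq_zero.mp h1.symm
    set W : Polynomial (ZMod p) := G - Polynomial.X with hW_def
    have hWd : Polynomial.derivative W = 0 := by
      rw [hW_def, map_sub, hdG, Polynomial.derivative_X, sub_self]
    have hWdeg : W.natDegree ≤ m := by
      refine le_trans (natDegree_sub_le _ _) ?_
      simp [hG_deg, natDegree_X, hm1]
    have hW_C : W = Polynomial.C (W.coeff 0) := by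
      ext k
      rcases Nat.eq_zero_or_pos k with rfl | hk
      · simp
      · rw [coeff_C, if_neg (by omega)]
        rcases le_or_gt k m with hkm | hkm
        · have hd := Polynomial.coeff_derivative W (k - 1)
          rw [hWd, coeff_zero, show k - 1 + 1 = k from by omega] at hd
          have hne : ((k - 1 : ℕ) + 1 : ZMod p) ≠ 0 := by
            have hcast : ((k - 1 : ℕ) + 1 : ZMod p) = ((k - 1 + 1 : ℕ) : ZMod p) := by push_cast; ring
            rw [hcast]
            intro h0
            have hdv := (ZMod.natCast_eq_zero_iff _ p).mp h0
            have := Nat.le_of_dvd (by omega) hdv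
            omega
          rcases mul_eq_zero.mp hd.symm with h | h
          · exact h
          · exact absurd h hne
        · exact coeff_eq_zero_of_natDegree_lt (lt_of_le_of_lt hWdeg hkm)
    have hGX : G = Polynomial.X + Polynomial.C (W.coeff 0) := by
      have := hW_C
      rw [hW_def] at this
      linear_combination this
    have hF₀_form : F₀ = Polynomial.X ^ p + Polynomial.C (W.coeff 0) := by
      rw [hG_def] at hGX
      linear_combination hGX
    refine ⟨c₀, -(W.coeff 0), fun x => ?_⟩
    have h1 := hF₀_eval x
    rw [hF₀_form, eval_add, eval_pow, eval_X, eval_C, ZMod.pow_card] at h1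
    have h2 : v x = -(W.coeff 0) := by linear_combination h1
    rw [hv_def] at h2
    simp only at h2
    linear_combination h2
  · -- non-linear case: contradiction
    exfalso
    set V : Finset (ZMod p) := Finset.univ.image v with hV_def
    have hG_eval : ∀ w ∈ V, Polynomial.eval w G = 0 := by
      intro w hw
      obtain ⟨x, _, rfl⟩ := Finset.mem_image.mp hw
      rw [hG_def, eval_sub, hF₀_eval x, eval_sub, eval_pow, eval_X, ZMod.pow_card]
      ring
    have hVcard : V.card ≤ m := by
      have hsubset : V ⊆ G.roots.toFinset := by
        intro w hw
        rw [Multiset.mem_toFinset, Polynomial.mem_roots hG_ne]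
        exact hG_eval w hw
      calc V.card ≤ G.roots.toFinset.card := Finset.card_le_card hsubset
        _ ≤ Multiset.card G.roots := Multiset.toFinset_card_le _
        _ ≤ G.natDegree := Polynomial.card_roots' G
        _ ≤ m := hG_deg
    set μ : ZMod p → ℕ := fun w => (Finset.univ.filter (fun x => v x = w)).card with hμ_def
    have hμsum : ∑ w ∈ V, μ w = p := by
      have h1 := Finset.card_eq_sum_card_image v (Finset.univ : Finset (ZMod p))
      rw [Finset.card_univ, hcardK] at h1
      exact h1.symm
    have hμpos : ∀ w ∈ V, 1 ≤ μ w := by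
      intro w hw
      obtain ⟨x, _, rfl⟩ := Finset.mem_image.mp hw
      rw [hμ_def]
      refine Finset.card_pos.mpr ⟨x, ?_⟩
      simp
    have hdvd : ∀ w ∈ V,
        (Polynomial.X - Polynomial.C w) ^ (μ w - 1) ∣ Polynomial.derivative F₀ := by
      intro w hw
      have hsplit := Finset.prod_filter_mul_prod_filter_not Finset.univ (fun x => v x = w)
        (fun x : ZMod p => Polynomial.X - Polynomial.C (v x))
      have h1 : (∏ x ∈ Finset.univ.filter (fun x => v x = w),
          (Polynomial.X - Polynomial.C (v x))) = (Polynomial.X - Polynomial.C w) ^ (μ w) := by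
        have hcg : ∀ x ∈ Finset.univ.filter (fun x => v x = w),
            (Polynomial.X - Polynomial.C (v x)) = (Polynomial.X - Polynomial.C w) := by
          intro x hx
          rw [(Finset.mem_filter.mp hx).2]
        rw [Finset.prod_congr rfl hcg, Finset.prod_const]
      have hF₀_eq : F₀ = (Polynomial.X - Polynomial.C w) ^ (μ w)
          * ∏ x ∈ Finset.univ.filter (fun x => ¬ v x = w),
              (Polynomial.X - Polynomial.C (v x)) := by
        rw [hF₀_prod, ← hsplit, h1]
      rw [hF₀_eq, derivative_mul, derivative_pow]
      refine dvd_add ?_ ?_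
      · exact dvd_mul_of_dvd_left (dvd_mul_of_dvd_left (dvd_mul_left _ _) _) _
      · exact dvd_mul_of_dvd_left (pow_dvd_pow _ (by omega)) _
    have hpair : (↑V : Set (ZMod p)).Pairwise
        (Function.onFun IsCoprime fun w => (Polynomial.X - Polynomial.C w) ^ (μ w - 1)) := by
      intro a _ b _ hab
      exact (Polynomial.isCoprime_X_sub_C_of_isUnit_sub
        (isUnit_iff_ne_zero.mpr (sub_ne_zero.mpr hab))).pow
    have hprod_dvd : (∏ w ∈ V, (Polynomial.X - Polynomial.C w) ^ (μ w - 1))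
        ∣ Polynomial.derivative F₀ := Finset.prod_dvd_of_coprime hpair hdvd
    have hdeg_prod : (∏ w ∈ V, (Polynomial.X - Polynomial.C w) ^ (μ w - 1)).natDegree
        = ∑ w ∈ V, (μ w - 1) := by
      rw [Polynomial.natDegree_prod _ _ (fun w _ => pow_ne_zero _ (Polynomial.X_sub_C_ne_zero w))]
      refine Finset.sum_congr rfl fun w _ => ?_
      rw [Polynomial.natDegree_pow, natDegree_X_sub_C, mul_one]
    have hdF_deg : (Polynomial.derivative F₀).natDegree ≤ m - 1 := by
      rw [hderivF]
      refine le_trans (natDegree_sub_le _ _) ?_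
      simp only [natDegree_one, max_le_iff, Nat.zero_le, and_true]
      exact le_trans (natDegree_derivative_le G) (by omega)
    have hle : ∑ w ∈ V, (μ w - 1) ≤ m - 1 := by
      rw [← hdeg_prod]
      exact le_trans (Polynomial.natDegree_le_of_dvd hprod_dvd hD) hdF_deg
    have hsum_eq : ∑ w ∈ V, (μ w - 1) + V.card = p := by
      have h1 : ∑ w ∈ V, ((μ w - 1) + 1) = ∑ w ∈ V, μ w :=
        Finset.sum_congr rfl fun w hw => by have := hμpos w hw; omega
      have h2 := h1.trans hμsum
      rw [Finset.sum_add_distrib, Finset.sum_const, smul_eq_mul, mul_one] at h2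
      exact h2
    omega


theorem integral_point_set_collinear_of_three_mod_four (p : ℕ) (hp : p.Prime)
    (hp4 : p % 4 = 3) (P : Finset (ZMod p × ZMod p)) (hcard : P.card = p)
    (hint : ∀ u ∈ P, ∀ v ∈ P, IntegralDistance2 p u v) :
    SetCollinear p ↑P := by
  classical
  haveI : Fact p.Prime := ⟨hp⟩
  have hp3 : 3 ≤ p := by
    have := hp.two_le
    omega
  have hns : ¬ IsSquare (-1 : ZMod p) := by
    rw [ZMod.exists_sq_eq_neg_one_iff]
    simp [hp4]
  have h2ne : (2 : ZMod p) ≠ 0 := by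
    intro h
    have h' : ((2 : ℕ) : ZMod p) = 0 := by exact_mod_cast h
    have := Nat.le_of_dvd (by omega) ((ZMod.natCast_eq_zero_iff 2 p).mp h')
    omega
  -- the set of "allowed" slopes
  set M : Finset (ZMod p) := Finset.univ.filter (fun t => ∃ s : ZMod p, 1 + t ^ 2 = s ^ 2)
    with hM_def
  have hMcard : M.card ≤ (p - 1) / 2 := by
    set T : Finset (ZMod p) := Finset.univ.erase 0 with hT_def
    set φ : ZMod p → ZMod p := fun t => (t - t⁻¹) * (2 : ZMod p)⁻¹ with hφ_def
    have h2i : (2 : ZMod p) * (2 : ZMod p)⁻¹ = 1 := mul_inv_cancel₀ h2ne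
    have hsub : M ⊆ T.image φ := by
      intro t ht
      obtain ⟨s, hs⟩ := (Finset.mem_filter.mp ht).2
      have hs0 : s + t ≠ 0 := by
        intro h
        have hst : s = -t := by linear_combination h
        rw [hst] at hs
        exact one_ne_zero (by linear_combination hs : (1 : ZMod p) = 0)
      refine Finset.mem_image.mpr ⟨s + t, Finset.mem_erase.mpr ⟨hs0, Finset.mem_univ _⟩, ?_⟩
      have hinv : (s + t)⁻¹ = s - t := by
        refine inv_eq_of_mul_eq_one_right ?_
        linear_combination -hs
      rw [hφ_def]
      simp only
      rw [hinv]
      linear_combination t * h2i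
    have hcount : ∀ y ∈ T.image φ, 2 ≤ (T.filter (fun t => φ t = y)).card := by
      intro y hy
      obtain ⟨t, ht, hφt⟩ := Finset.mem_image.mp hy
      have ht0 : t ≠ 0 := (Finset.mem_erase.mp ht).1
      have hι0 : -t⁻¹ ≠ 0 := by simp [ht0]
      have hιφ : φ (-t⁻¹) = φ t := by
        rw [hφ_def]
        simp only
        rw [inv_neg, inv_inv]
        ring
      have hιne : -t⁻¹ ≠ t := by
        intro h
        have hti : t⁻¹ * t = 1 := inv_mul_cancel₀ ht0
        exact hns ⟨t, by linear_combination t * h + hti⟩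
      have hpair : ({t, -t⁻¹} : Finset (ZMod p)) ⊆ T.filter (fun t' => φ t' = y) := by
        intro z hz
        rcases Finset.mem_insert.mp hz with rfl | hz
        · exact Finset.mem_filter.mpr ⟨ht, hφt⟩
        · rw [Finset.mem_singleton.mp hz]
          exact Finset.mem_filter.mpr ⟨Finset.mem_erase.mpr ⟨hι0, Finset.mem_univ _⟩,
            hιφ.trans hφt⟩
      calc 2 = ({t, -t⁻¹} : Finset (ZMod p)).card := (Finset.card_pair (Ne.symm hιne)).symm
        _ ≤ _ := Finset.card_le_card hpair
    have h1 := Finset.card_eq_sum_card_image φ T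
    have h2 : 2 * (T.image φ).card ≤ T.card := by
      rw [h1]
      calc 2 * (T.image φ).card = ∑ _y ∈ T.image φ, 2 := by
            rw [Finset.sum_const, smul_eq_mul, mul_comm]
        _ ≤ _ := Finset.sum_le_sum hcount
    have hT : T.card = p - 1 := by
      rw [hT_def, Finset.card_erase_of_mem (Finset.mem_univ 0), Finset.card_univ, ZMod.card]
    have h3 := Finset.card_le_card hsub
    omega
  -- a non-allowed direction exists
  have hm₀ : ∃ m₀ : ZMod p, m₀ ∉ M := by
    by_contra h
    push_neg at h
    have hsub : (Finset.univ : Finset (ZMod p)) ⊆ M := fun x _ => h x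
    have := Finset.card_le_card hsub
    rw [Finset.card_univ, ZMod.card] at this
    omega
  obtain ⟨m₀, hm₀⟩ := hm₀
  -- distinct points of P have distinct projections
  have hproj : ∀ u ∈ P, ∀ w ∈ P, u.2 - m₀ * u.1 = w.2 - m₀ * w.1 → u = w := by
    intro u hu w hw h
    by_contra hne
    have ha : u.1 - w.1 ≠ 0 := by
      intro ha0
      have hb0 : u.2 - w.2 = 0 := by linear_combination h + m₀ * ha0
      exact hne (Prod.ext (by linear_combination ha0) (by linear_combination hb0))
    obtain ⟨d, hd⟩ := hint u hu w hw
    have hb : u.2 - w.2 = m₀ * (u.1 - w.1) := by linear_combination h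
    have hai : (u.1 - w.1) * (u.1 - w.1)⁻¹ = 1 := mul_inv_cancel₀ ha
    refine hm₀ (Finset.mem_filter.mpr ⟨Finset.mem_univ _, ⟨d * (u.1 - w.1)⁻¹, ?_⟩⟩)
    rw [hb] at hd
    linear_combination ((u.1 - w.1)⁻¹)^2 * hd
      - (1 + m₀ ^ 2) * (1 + (u.1 - w.1) * (u.1 - w.1)⁻¹) * hai
  -- the point set is a graph over the projection
  set g : {a // a ∈ P} → ZMod p := fun q => q.1.2 - m₀ * q.1.1 with hg_def
  have hginj : Function.Injective g := by
    intro q₁ q₂ h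
    exact Subtype.ext (hproj q₁.1 q₁.2 q₂.1 q₂.2 h)
  have hgbij : Function.Bijective g := by
    refine (Fintype.bijective_iff_injective_and_card g).2 ⟨hginj, ?_⟩
    rw [Fintype.card_coe, hcard, ZMod.card]
  set e : {a // a ∈ P} ≃ ZMod p := Equiv.ofBijective g hgbij with he_def
  set f : ZMod p → ZMod p := fun x => (e.symm x).1.1 with hf_def
  have hsymm1 : ∀ x : ZMod p, (e.symm x).1.1 = f x := fun x => rfl
  have hsymm2 : ∀ x : ZMod p, (e.symm x).1.2 - m₀ * (e.symm x).1.1 = x := by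
    intro x
    have := e.apply_symm_apply x
    exact this
  -- the non-determined slopes
  set NS : Finset (ZMod p) :=
    Finset.univ \ (insert (0 : ZMod p) (M.image (fun t => (t - m₀)⁻¹))) with hNS_def
  have hNScard : (p - 1) / 2 ≤ NS.card := by
    rw [hNS_def, Finset.card_sdiff_of_subset (Finset.subset_univ _), Finset.card_univ, ZMod.card]
    have hc1 := Finset.card_insert_le (0 : ZMod p) (M.image (fun t => (t - m₀)⁻¹))
    have hc2 := Finset.card_image_le (s := M) (f := fun t => (t - m₀)⁻¹)
    have hodd : p % 2 = 1 := Nat.odd_iff.mp (hp.odd_of_ne_two (by omega))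
    omega
  have hNSinj : ∀ c ∈ NS, Function.Injective fun x : ZMod p => f x - c * x := by
    intro c hc x₁ x₂ h12
    simp only at h12
    by_contra hxne
    have hcmem := (Finset.mem_sdiff.mp hc).2
    set u : ZMod p × ZMod p := (e.symm x₁).1 with hu_def
    set w : ZMod p × ZMod p := (e.symm x₂).1 with hw_def
    have hu : u ∈ P := (e.symm x₁).2
    have hw : w ∈ P := (e.symm x₂).2
    have hu1 : u.1 = f x₁ := rfl
    have hw1 : w.1 = f x₂ := rfl
    have hux : u.2 - m₀ * u.1 = x₁ := hsymm2 x₁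
    have hwx : w.2 - m₀ * w.1 = x₂ := hsymm2 x₂
    set a : ZMod p := u.1 - w.1 with ha_def
    set b : ZMod p := u.2 - w.2 with hb_def
    have heq : a = c * (x₁ - x₂) := by
      rw [ha_def, hu1, hw1]
      linear_combination h12
    have hxx : x₁ - x₂ = b - m₀ * a := by
      rw [← hux, ← hwx, hb_def, ha_def]
      ring
    obtain ⟨d, hd⟩ := hint u hu w hw
    by_cases ha : a = 0
    · have hc0 : c = 0 := by
        have hx12 : x₁ - x₂ ≠ 0 := sub_ne_zero.mpr hxne
        have : c * (x₁ - x₂) = 0 := by rw [← heq, ha]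
        exact (mul_eq_zero.mp this).resolve_right hx12
      refine hcmem ?_
      rw [hc0]
      exact Finset.mem_insert_self 0 _
    · have hai : a * a⁻¹ = 1 := mul_inv_cancel₀ ha
      set t : ZMod p := b * a⁻¹ with ht_def
      have htM : t ∈ M := by
        refine Finset.mem_filter.mpr ⟨Finset.mem_univ _, ⟨d * a⁻¹, ?_⟩⟩
        linear_combination (a⁻¹)^2 * hd - (1 + a * a⁻¹) * hai
      have hbt : b = t * a := by
        rw [ht_def]
        have hai' : a⁻¹ * a = 1 := inv_mul_cancel₀ ha
        linear_combination -b * hai'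
      have hma : a * (1 - c * (t - m₀)) = 0 := by
        have heq2 : a = c * (b - m₀ * a) := by linear_combination heq + c * hxx
        linear_combination heq2 + c * hbt
      have hct : c * (t - m₀) = 1 := by
        have := (mul_eq_zero.mp hma).resolve_left ha
        linear_combination -this
      have hcinv : c = (t - m₀)⁻¹ := eq_inv_of_mul_eq_one_left hct
      refine hcmem (Finset.mem_insert.mpr (Or.inr ?_))
      exact Finset.mem_image.mpr ⟨t, htM, hcinv.symm⟩
  obtain ⟨c₀, γ, hlin⟩ := redei_core p hp3 f NS hNScard hNSinj
  refine ⟨γ, m₀ * γ, c₀, 1 + m₀ * c₀, ?_⟩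
  intro x hx
  have hxP : x ∈ P := hx
  set q : {a // a ∈ P} := ⟨x, hxP⟩ with hq_def
  set wq : ZMod p := x.2 - m₀ * x.1 with hwq_def
  have hgq : e q = wq := rfl
  have hfq : f wq = x.1 := by
    rw [hf_def]
    simp only
    rw [← hgq, e.symm_apply_apply]
  refine ⟨wq, ?_, ?_⟩
  · rw [← hfq, hlin wq]
    ring
  · have h1 : x.1 = c₀ * wq + γ := by rw [← hfq, hlin wq]
    rw [hwq_def] at h1 ⊢
    linear_combination m₀ * h1
end

section
/- Let p be a prime with p ≡ 3 (mod 4). Then \overline{I}(p,2) = (p+1)/2; that is, the maximum cardinality of a subset of (ℤ/pℤ)² whose points are pairwise at integral distance and no three of whose points are collinear equals (p+1)/2. -/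
/-- Points `p₁, p₂, p₃ ∈ (ℤ/nℤ)²` are collinear if there are
`a, b, t₁, t₂, wᵢ ∈ ℤ/nℤ` with `pᵢ = (a + wᵢ·t₁, b + wᵢ·t₂)`. -/
def Collinear3 (n : ℕ) (p₁ p₂ p₃ : ZMod n × ZMod n) : Prop :=
  ∃ a b t₁ t₂ w₁ w₂ w₃ : ZMod n,
    p₁.1 = a + w₁ * t₁ ∧ p₁.2 = b + w₁ * t₂ ∧
    p₂.1 = a + w₂ * t₁ ∧ p₂.2 = b + w₂ * t₂ ∧
    p₃.1 = a + w₃ * t₁ ∧ p₃.2 = b + w₃ * t₂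

/-- A set of points of `(ℤ/nℤ)²` is in semi-general position if no three of its
points are collinear. -/
def SemiGeneralPosition (n : ℕ) (S : Finset (ZMod n × ZMod n)) : Prop :=
  ∀ p₁ ∈ S, ∀ p₂ ∈ S, ∀ p₃ ∈ S,
    p₁ ≠ p₂ → p₁ ≠ p₃ → p₂ ≠ p₃ → ¬ Collinear3 n p₁ p₂ p₃

/-- `maxIntegralCardSGP n` (denoted `Ī(n,2)` in the paper) is the maximum
cardinality of a subset of `(ℤ/nℤ)²` with pairwise integral distances and
no three points collinear. -/
noncomputable def maxIntegralCardSGP (n : ℕ) : ℕ :=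
  sSup {k : ℕ | ∃ S : Finset (ZMod n × ZMod n),
    (∀ u ∈ S, ∀ v ∈ S, IntegralDistance2 n u v) ∧
      SemiGeneralPosition n S ∧ S.card = k}

/-! ### Auxiliary combinatorial lemmas -/

open Finset

lemma card_image_two_to_one {α β : Type*} [Fintype α] [DecidableEq α] [DecidableEq β]
    (f : α → β) (σ : α → α) (h1 : ∀ a, f (σ a) = f a)
    (h2 : ∀ a b, f a = f b → b = a ∨ b = σ a) (h3 : ∀ a, σ (σ a) = a) :
    (Finset.univ.image f).card * 2 =
      Fintype.card α + (Finset.univ.filter fun a => σ a = a).card := by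
  classical
  have hc1 : Fintype.card α =
      ∑ y ∈ Finset.univ.image f, ((Finset.univ.filter fun a => f a = y)).card := by
    rw [← Finset.card_univ]
    exact Finset.card_eq_sum_card_fiberwise (fun x _ => Finset.mem_image_of_mem f (mem_univ x))
  have hc2 : (Finset.univ.filter fun a => σ a = a).card =
      ∑ y ∈ Finset.univ.image f,
        (((Finset.univ.filter fun a => σ a = a)).filter fun a => f a = y).card :=
    Finset.card_eq_sum_card_fiberwise (fun x _ => Finset.mem_image_of_mem f (mem_univ x))
  rw [hc1, hc2, ← Finset.sum_add_distrib, Finset.card_eq_sum_ones (Finset.univ.image f),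
    Finset.sum_mul]
  apply Finset.sum_congr rfl
  intro y hy
  obtain ⟨a, -, rfl⟩ := Finset.mem_image.mp hy
  have hfib : (Finset.univ.filter fun b => f b = f a) = {a, σ a} := by
    ext b
    simp only [Finset.mem_filter, Finset.mem_univ, true_and, Finset.mem_insert,
      Finset.mem_singleton]
    constructor
    · intro h; exact h2 a b h.symm
    · rintro (rfl | rfl)
      · rfl
      · exact h1 a
  by_cases hfix : σ a = a
  · have h1' : (Finset.univ.filter fun b => f b = f a).card = 1 := by
      rw [hfib, hfix]; simp
    have h2' : (((Finset.univ.filter fun b => σ b = b)).filter fun b => f b = f a).card = 1 := by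
      have : (((Finset.univ.filter fun b => σ b = b)).filter fun b => f b = f a) = {a} := by
        ext b
        simp only [Finset.mem_filter, Finset.mem_univ, true_and, Finset.mem_singleton]
        constructor
        · rintro ⟨hb1, hb2⟩
          rcases h2 a b hb2.symm with rfl | rfl
          · rfl
          · exact hfix
        · rintro rfl; exact ⟨hfix, rfl⟩
      rw [this]; simp
    omega
  · have h1' : (Finset.univ.filter fun b => f b = f a).card = 2 := by
      rw [hfib]
      rw [Finset.card_insert_of_notMem (by simpa using fun h => hfix h.symm)]
      simp
    have h2' : (((Finset.univ.filter fun b => σ b = b)).filter fun b => f b = f a).card = 0 := by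
      rw [Finset.card_eq_zero]
      ext b
      simp only [Finset.mem_filter, Finset.mem_univ, true_and, Finset.notMem_empty,
        iff_false, not_and]
      intro hb1 hb2
      rcases h2 a b hb2.symm with rfl | rfl
      · exact hfix hb1
      · apply hfix
        rw [← hb1]
        exact h3 a
    omega

lemma even_card_of_pairing {α : Type*} [DecidableEq α] (S : Finset α) (f : α → α)
    (hmem : ∀ x ∈ S, f x ∈ S) (hne : ∀ x ∈ S, f x ≠ x) (hinv : ∀ x ∈ S, f (f x) = x) :
    Even S.card := by
  classical
  induction S using Finset.strongInductionOn with
  | _ S ih =>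
    rcases Finset.eq_empty_or_nonempty S with rfl | ⟨x, hx⟩
    · simp
    · have hfx : f x ∈ S := hmem x hx
      have hfxx : f x ≠ x := hne x hx
      set S' := (S.erase x).erase (f x) with hS'
      have hsub : S' ⊆ S := (Finset.erase_subset _ _).trans (Finset.erase_subset _ _)
      have hmemS' : ∀ y, y ∈ S' ↔ y ∈ S ∧ y ≠ x ∧ y ≠ f x := by
        intro y
        simp only [hS', Finset.mem_erase]
        tauto
      have hcard : S'.card = S.card - 2 := by
        rw [hS', Finset.card_erase_of_mem, Finset.card_erase_of_mem hx]
        · omega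
        · exact Finset.mem_erase.mpr ⟨hfxx, hfx⟩
      have hssub : S' ⊂ S := Finset.ssubset_of_ssubset_of_subset
        (Finset.erase_ssubset (Finset.mem_erase.mpr ⟨hfxx, hfx⟩)) (Finset.erase_subset _ _)
      have hE : Even S'.card := by
        apply ih S' hssub
        · intro y hy
          obtain ⟨hyS, hyx, hyfx⟩ := (hmemS' y).mp hy
          rw [hmemS']
          refine ⟨hmem y hyS, ?_, ?_⟩
          · intro h
            apply hyfx
            have h' := hinv y hyS
            rw [h] at h'
            exact h'.symm ▸ rfl
          · intro h
            apply hyx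
            have := hinv y hyS
            rw [h, hinv x hx] at this
            exact this.symm
        · exact fun y hy => hne y (hsub hy)
        · exact fun y hy => hinv y (hsub hy)
      have h2 : 2 ≤ S.card := by
        have := Finset.card_le_card (Finset.insert_subset hfx (Finset.singleton_subset_iff.mpr hx))
        simpa [Finset.card_insert_of_notMem, hfxx] using this
      obtain ⟨r, hr⟩ := hE
      exact ⟨r + 1, by omega⟩

/-! ### Field lemmas -/

section Field
variable (p : ℕ) [Fact p.Prime]

lemma neg_one_not_sq (hp4 : p % 4 = 3) : ¬ IsSquare (-1 : ZMod p) := by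
  rw [ZMod.exists_sq_eq_neg_one_iff]
  simp [hp4]

variable {p}

lemma sq_add_sq_eq_zero (hp4 : p % 4 = 3) {x y : ZMod p} (h : x ^ 2 + y ^ 2 = 0) :
    x = 0 ∧ y = 0 := by
  have hy : y = 0 := by
    by_contra hy
    apply neg_one_not_sq p hp4
    refine ⟨x * y⁻¹, ?_⟩
    field_simp
    linear_combination -h
  subst hy
  refine ⟨?_, rfl⟩
  have : x ^ 2 = 0 := by linear_combination h
  exact pow_eq_zero_iff (by norm_num) |>.mp this

lemma one_add_sq_ne_zero (hp4 : p % 4 = 3) (t : ZMod p) : 1 + t ^ 2 ≠ 0 := by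
  intro h
  have := (sq_add_sq_eq_zero hp4 (x := 1) (y := t) (by linear_combination h)).1
  simp at this

lemma twoNeZero (hp4 : p % 4 = 3) : (2 : ZMod p) ≠ 0 := by
  have : ((2 : ℕ) : ZMod p) = 0 ↔ p ∣ 2 := ZMod.natCast_eq_zero_iff 2 p
  intro h
  have hd : p ∣ 2 := this.mp (by exact_mod_cast h)
  have := Nat.le_of_dvd (by norm_num) hd
  omega

end Field

/-! ### Direction set -/

section Dir
variable (p : ℕ) [Fact p.Prime]

noncomputable def slopeF (u : (ZMod p)ˣ) : ZMod p := ((u : ZMod p) - (u : ZMod p)⁻¹) / 2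

noncomputable def Dset : Finset (Option (ZMod p)) :=
  insert none ((Finset.univ.image (slopeF p)).image some)

variable {p}


lemma card_slope_image (hp4 : p % 4 = 3) :
    (Finset.univ.image (slopeF p)).card * 2 = p - 1 := by
  have h2 : (2 : ZMod p) ≠ 0 := twoNeZero hp4
  have key := card_image_two_to_one (slopeF p) (fun u => -u⁻¹)
    (fun u => by
      have hu : (u : ZMod p) ≠ 0 := Units.ne_zero u
      simp only [slopeF, Units.val_neg, Units.val_inv_eq_inv_val]
      rw [inv_neg, inv_inv]
      ring)
    (fun a b hab => by
      have ha : (a : ZMod p) ≠ 0 := Units.ne_zero a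
      have hb : (b : ZMod p) ≠ 0 := Units.ne_zero b
      simp only [slopeF, div_eq_div_iff h2 h2] at hab
      have hab' : (a : ZMod p) - (a : ZMod p)⁻¹ = (b : ZMod p) - (b : ZMod p)⁻¹ :=
        mul_right_cancel₀ h2 hab
      have h3 : ((a : ZMod p) - (b : ZMod p)) * ((a : ZMod p) * b + 1) = 0 := by
        field_simp at hab'
        linear_combination hab'
      rcases mul_eq_zero.mp h3 with h4 | h4
      · left
        ext
        have : (a : ZMod p) = b := by linear_combination h4
        exact this.symm
      · right
        ext
        simp only [Units.val_neg, Units.val_inv_eq_inv_val]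
        field_simp
        linear_combination h4)
    (fun u => by simp)
  have hfix : (Finset.univ.filter fun u : (ZMod p)ˣ => -u⁻¹ = u) = ∅ := by
    ext u
    simp only [Finset.mem_filter, Finset.mem_univ, true_and, Finset.notMem_empty, iff_false]
    intro h
    apply neg_one_not_sq p hp4
    have : ((-u⁻¹ : (ZMod p)ˣ) : ZMod p) = u := by rw [h]
    simp only [Units.val_neg, Units.val_inv_eq_inv_val] at this
    refine ⟨(u : ZMod p), ?_⟩
    have hu : (u : ZMod p) ≠ 0 := Units.ne_zero u
    field_simp at this
    linear_combination this
  rw [hfix] at key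
  rw [ZMod.card_units] at key
  simpa using key

lemma card_Dset (hp4 : p % 4 = 3) : (Dset p).card = (p + 1) / 2 := by
  have h1 := card_slope_image hp4
  have hodd : p % 2 = 1 := by omega
  have hp2 : 2 ≤ p := (Fact.out : p.Prime).two_le
  rw [Dset, Finset.card_insert_of_notMem (by simp), Finset.card_image_of_injective _
    (Option.some_injective _)]
  omega

lemma mem_slope_image (hp4 : p % 4 = 3) {m : ZMod p} (h : IsSquare (1 + m ^ 2)) :
    m ∈ Finset.univ.image (slopeF p) := by
  obtain ⟨d, hd⟩ := h
  have hmul : (d + m) * (d - m) = 1 := by linear_combination -hd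
  refine Finset.mem_image.mpr ⟨Units.mkOfMulEqOne _ _ hmul, Finset.mem_univ _, ?_⟩
  have hinv : (d + m)⁻¹ = d - m := inv_eq_of_mul_eq_one_right hmul
  simp only [slopeF, Units.val_mkOfMulEqOne, hinv]
  rw [div_eq_iff (twoNeZero hp4)]
  ring

/-! ### Directions and collinearity -/

section Dir2
variable {p : ℕ} [Fact p.Prime]

/-- The direction (slope) from `x` to `y`; `none` means vertical. -/
noncomputable def dirn (x y : ZMod p × ZMod p) : Option (ZMod p) :=
  if x.1 = y.1 then none else some ((y.2 - x.2) / (y.1 - x.1))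

lemma dirn_eq_none_iff {x y : ZMod p × ZMod p} : dirn x y = none ↔ x.1 = y.1 := by
  unfold dirn
  split <;> simp_all

lemma collinear_of_cross {x y z : ZMod p × ZMod p} (hxy : x ≠ y)
    (hc : (y.1 - x.1) * (z.2 - x.2) = (y.2 - x.2) * (z.1 - x.1)) :
    Collinear3 p x y z := by
  by_cases h1 : y.1 - x.1 ≠ 0
  · refine ⟨x.1, x.2, y.1 - x.1, y.2 - x.2, 0, 1, (z.1 - x.1) / (y.1 - x.1),
      by ring, by ring, by ring, by ring, by field_simp; ring, by
        field_simp
        linear_combination hc⟩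
  · push_neg at h1
    have h2 : y.2 - x.2 ≠ 0 := by
      intro h2
      apply hxy
      have : y.1 = x.1 := by linear_combination h1
      have : y.2 = x.2 := by linear_combination h2
      exact Prod.ext (by linear_combination h1) (by linear_combination h2) |>.symm
    refine ⟨x.1, x.2, y.1 - x.1, y.2 - x.2, 0, 1, (z.2 - x.2) / (y.2 - x.2),
      by ring, by ring, by ring, by ring, by
        field_simp
        linear_combination -hc, by field_simp; ring⟩

lemma collinear_of_dirn_eq {x y z : ZMod p × ZMod p} (hxy : x ≠ y)
    (h : dirn x y = dirn x z) : Collinear3 p x y z := by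
  unfold dirn at h
  split at h
  · next h1 =>
    split at h
    · next h2 =>
      exact collinear_of_cross hxy (by rw [← h1, ← h2]; ring)
    · simp at h
  · next h1 =>
    split at h
    · simp at h
    · next h2 =>
      simp only [Option.some_inj] at h
      apply collinear_of_cross hxy
      have e1 : y.1 - x.1 ≠ 0 := fun hh => h1 (by linear_combination -hh)
      have e2 : z.1 - x.1 ≠ 0 := fun hh => h2 (by linear_combination -hh)
      rw [div_eq_div_iff e1 e2] at h
      linear_combination -h

lemma dirn_mem_Dset (hp4 : p % 4 = 3) {x y : ZMod p × ZMod p}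
    (h : IntegralDistance2 p x y) : dirn x y ∈ Dset p := by
  unfold dirn
  split
  · exact Finset.mem_insert_self _ _
  · next h1 =>
    obtain ⟨d, hd⟩ := h
    apply Finset.mem_insert_of_mem
    apply Finset.mem_image_of_mem
    apply mem_slope_image hp4
    have e1 : y.1 - x.1 ≠ 0 := fun hh => h1 (by linear_combination -hh)
    refine ⟨d / (y.1 - x.1), ?_⟩
    have hd' : (y.1 - x.1) ^ 2 + (y.2 - x.2) ^ 2 = d ^ 2 := by linear_combination hd
    rw [div_mul_div_comm, ← pow_two, ← pow_two, div_pow,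
      add_div' _ _ _ (pow_ne_zero 2 e1), div_eq_div_iff (pow_ne_zero 2 e1) (pow_ne_zero 2 e1)]
    linear_combination ((y.1 - x.1) ^ 2) * hd'

end Dir2


/-! ### The circle construction (lower bound) -/

section Circle
variable {p : ℕ} [Fact p.Prime]

noncomputable def ct (t : ZMod p) : ZMod p := (1 - t ^ 2) / (1 + t ^ 2)
noncomputable def st (t : ZMod p) : ZMod p := 2 * t / (1 + t ^ 2)
noncomputable def hpt (t : ZMod p) : ZMod p × ZMod p :=
  (ct t ^ 2 - st t ^ 2, 2 * ct t * st t)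

lemma ct_st_circle (hp4 : p % 4 = 3) (t : ZMod p) : ct t ^ 2 + st t ^ 2 = 1 := by
  have hq := one_add_sq_ne_zero hp4 t
  unfold ct st
  field_simp
  ring

lemma ct_ne_neg_one (hp4 : p % 4 = 3) (t : ZMod p) : ct t ≠ -1 := by
  have hq := one_add_sq_ne_zero hp4 t
  unfold ct
  rw [Ne, div_eq_iff hq]
  intro h
  apply twoNeZero hp4
  linear_combination h

lemma st_eq (hp4 : p % 4 = 3) (t : ZMod p) : st t = t * (1 + ct t) := by
  have hq := one_add_sq_ne_zero hp4 t
  unfold ct st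
  field_simp
  ring

lemma param_inj (hp4 : p % 4 = 3) {a b : ZMod p} (h1 : ct a = ct b) (h2 : st a = st b) :
    a = b := by
  have ha := st_eq hp4 a
  have hb := st_eq hp4 b
  rw [h1] at ha
  rw [ha, hb] at h2
  have hne : (1 : ZMod p) + ct b ≠ 0 := by
    intro h
    exact ct_ne_neg_one hp4 b (by linear_combination h)
  exact mul_right_cancel₀ hne h2

lemma neg_param_ct (hp4 : p % 4 = 3) {a : ZMod p} (ha : a ≠ 0) :
    ct (-a⁻¹) = -ct a ∧ st (-a⁻¹) = -st a := by
  have hq := one_add_sq_ne_zero hp4 a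
  have hq' := one_add_sq_ne_zero hp4 (-a⁻¹)
  have hinv : a * a⁻¹ = 1 := mul_inv_cancel₀ ha
  constructor
  · unfold ct
    rw [← neg_div, div_eq_div_iff hq' hq]
    linear_combination (-2 * (a * a⁻¹ + 1)) * hinv
  · unfold st
    rw [← neg_div, div_eq_div_iff hq' hq]
    linear_combination (2 * (a⁻¹ - a)) * hinv

lemma sq_pt_eq (hp4 : p % 4 = 3) {c1 s1 c2 s2 : ZMod p}
    (hx : c1 ^ 2 - s1 ^ 2 = c2 ^ 2 - s2 ^ 2) (hy : 2 * c1 * s1 = 2 * c2 * s2) :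
    (c1 = c2 ∧ s1 = s2) ∨ (c1 = -c2 ∧ s1 = -s2) := by
  have key : ((c1 - c2) ^ 2 + (s1 - s2) ^ 2) * ((c1 + c2) ^ 2 + (s1 + s2) ^ 2) = 0 := by
    linear_combination (c1 ^ 2 - s1 ^ 2 - c2 ^ 2 + s2 ^ 2) * hx + (2 * c1 * s1 - 2 * c2 * s2) * hy
  rcases mul_eq_zero.mp key with h | h
  · obtain ⟨e1, e2⟩ := sq_add_sq_eq_zero hp4 h
    exact Or.inl ⟨by linear_combination e1, by linear_combination e2⟩
  · obtain ⟨e1, e2⟩ := sq_add_sq_eq_zero hp4 h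
    exact Or.inr ⟨by linear_combination e1, by linear_combination e2⟩

lemma ct_zero : (ct 0 : ZMod p) = 1 := by
  unfold ct
  norm_num

lemma hpt_fiber (hp4 : p % 4 = 3) {a b : ZMod p} (h : hpt a = hpt b) : b = a ∨ b = -a⁻¹ := by
  have hx : ct a ^ 2 - st a ^ 2 = ct b ^ 2 - st b ^ 2 := congrArg Prod.fst h
  have hy : 2 * ct a * st a = 2 * ct b * st b := congrArg Prod.snd h
  rcases sq_pt_eq hp4 hx hy with ⟨e1, e2⟩ | ⟨e1, e2⟩
  · exact Or.inl (param_inj hp4 e1 e2).symm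
  · by_cases ha : a = 0
    · exfalso
      apply ct_ne_neg_one hp4 b
      rw [ha, ct_zero] at e1
      linear_combination e1
    · obtain ⟨f1, f2⟩ := neg_param_ct hp4 ha
      right
      exact (param_inj hp4 (by rw [f1]; linear_combination -e1) (by rw [f2]; linear_combination -e2)).symm

lemma hpt_integral (hp4 : p % 4 = 3) (a b : ZMod p) :
    IntegralDistance2 p (hpt a) (hpt b) := by
  refine ⟨2 * (ct a * st b - st a * ct b), ?_⟩
  have h1 := ct_st_circle hp4 a
  have h2 := ct_st_circle hp4 b
  unfold hpt
  simp only
  linear_combination (ct a ^ 2 + st a ^ 2 - ct b ^ 2 - st b ^ 2) * h1 -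
    (ct a ^ 2 + st a ^ 2 - ct b ^ 2 - st b ^ 2) * h2

lemma hpt_on_circle (hp4 : p % 4 = 3) (t : ZMod p) :
    (hpt t).1 ^ 2 + (hpt t).2 ^ 2 = 1 := by
  have h := ct_st_circle hp4 t
  unfold hpt
  simp only
  linear_combination (ct t ^ 2 + st t ^ 2 + 1) * h

noncomputable def cSet (p : ℕ) [Fact p.Prime] : Finset (ZMod p × ZMod p) :=
  Finset.univ.image hpt

lemma cSet_card (hp4 : p % 4 = 3) : (cSet p).card = (p + 1) / 2 := by
  have key := card_image_two_to_one (hpt (p := p)) (fun t => -t⁻¹)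
    (fun a => by
      by_cases ha : a = 0
      · rw [ha]; norm_num
      · obtain ⟨f1, f2⟩ := neg_param_ct hp4 ha
        unfold hpt
        rw [f1, f2]
        ring_nf)
    (fun a b hab => hpt_fiber hp4 hab)
    (fun a => by simp [inv_neg, inv_inv])
  have hfix : (Finset.univ.filter fun t : ZMod p => -t⁻¹ = t) = {0} := by
    ext t
    simp only [Finset.mem_filter, Finset.mem_univ, true_and, Finset.mem_singleton]
    constructor
    · intro h
      by_contra ht
      apply neg_one_not_sq p hp4
      refine ⟨t, ?_⟩
      have := congrArg (· * t) h
      rw [neg_mul, inv_mul_cancel₀ ht] at this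
      linear_combination this
    · rintro rfl; simp
  rw [hfix] at key
  simp only [Finset.card_singleton, ZMod.card] at key
  have hodd : p % 2 = 1 := by omega
  rw [cSet]
  omega

lemma cSet_sgp (hp4 : p % 4 = 3) : SemiGeneralPosition p (cSet p) := by
  intro q1 h1 q2 h2 q3 h3 ne12 ne13 ne23 hcol
  obtain ⟨a, b, t1, t2, w1, w2, w3, e11, e12, e21, e22, e31, e32⟩ := hcol
  have hc1 : q1.1 ^ 2 + q1.2 ^ 2 = 1 := by
    obtain ⟨t, -, rfl⟩ := Finset.mem_image.mp h1; exact hpt_on_circle hp4 t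
  have hc2 : q2.1 ^ 2 + q2.2 ^ 2 = 1 := by
    obtain ⟨t, -, rfl⟩ := Finset.mem_image.mp h2; exact hpt_on_circle hp4 t
  have hc3 : q3.1 ^ 2 + q3.2 ^ 2 = 1 := by
    obtain ⟨t, -, rfl⟩ := Finset.mem_image.mp h3; exact hpt_on_circle hp4 t
  rw [e11, e12] at hc1
  rw [e21, e22] at hc2
  rw [e31, e32] at hc3
  set A := t1 ^ 2 + t2 ^ 2 with hA
  set B := 2 * (a * t1 + b * t2) with hB
  set C := a ^ 2 + b ^ 2 - 1 with hC
  have Q1 : A * w1 ^ 2 + B * w1 + C = 0 := by rw [hA, hB, hC]; linear_combination hc1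
  have Q2 : A * w2 ^ 2 + B * w2 + C = 0 := by rw [hA, hB, hC]; linear_combination hc2
  have Q3 : A * w3 ^ 2 + B * w3 + C = 0 := by rw [hA, hB, hC]; linear_combination hc3
  have hw12 : w1 ≠ w2 := by
    intro h; exact ne12 (Prod.ext (by rw [e11, e21, h]) (by rw [e12, e22, h]))
  have hw13 : w1 ≠ w3 := by
    intro h; exact ne13 (Prod.ext (by rw [e11, e31, h]) (by rw [e12, e32, h]))
  have hw23 : w2 ≠ w3 := by
    intro h; exact ne23 (Prod.ext (by rw [e21, e31, h]) (by rw [e22, e32, h]))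
  have hAne : A ≠ 0 := by
    intro h
    obtain ⟨f1, f2⟩ := sq_add_sq_eq_zero hp4 (by rw [← hA]; exact h)
    exact ne12 (Prod.ext (by rw [e11, e21, f1]; ring) (by rw [e12, e22, f2]; ring))
  have r12 : A * (w1 + w2) + B = 0 := by
    have h12 : (w1 - w2) * (A * (w1 + w2) + B) = 0 := by linear_combination Q1 - Q2
    rcases mul_eq_zero.mp h12 with h | h
    · exact absurd (by linear_combination h) hw12
    · exact h
  have r13 : A * (w1 + w3) + B = 0 := by
    have h13 : (w1 - w3) * (A * (w1 + w3) + B) = 0 := by linear_combination Q1 - Q3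
    rcases mul_eq_zero.mp h13 with h | h
    · exact absurd (by linear_combination h) hw13
    · exact h
  have : A * (w2 - w3) = 0 := by linear_combination r12 - r13
  rcases mul_eq_zero.mp this with h | h
  · exact hAne h
  · exact hw23 (by linear_combination h)

end Circle


/-! ### Upper bound -/

section Upper
variable {p : ℕ} [Fact p.Prime]

lemma upper_bound (hp4 : p % 4 = 3) (S : Finset (ZMod p × ZMod p))
    (hint : ∀ u ∈ S, ∀ v ∈ S, IntegralDistance2 p u v)
    (hsgp : SemiGeneralPosition p S) : S.card ≤ (p + 1) / 2 := by
  by_contra hlt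
  push_neg at hlt
  obtain ⟨T, hTS, hTcard⟩ := Finset.exists_subset_card_eq (show (p + 1) / 2 + 1 ≤ S.card from hlt)
  have hintT : ∀ u ∈ T, ∀ v ∈ T, IntegralDistance2 p u v :=
    fun u hu v hv => hint u (hTS hu) v (hTS hv)
  have hsgpT : SemiGeneralPosition p T :=
    fun a ha b hb c hc => hsgp a (hTS ha) b (hTS hb) c (hTS hc)
  have hpair : ∀ x ∈ T, ∃ y ∈ T, y ≠ x ∧ y.1 = x.1 := by
    intro x hx
    have hinj : Set.InjOn (dirn x) (T.erase x) := by
      intro y hy z hz hyz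
      by_contra hne
      obtain ⟨hyx, hyT⟩ := Finset.mem_erase.mp hy
      obtain ⟨hzx, hzT⟩ := Finset.mem_erase.mp hz
      exact hsgpT x hx y hyT z hzT hyx.symm hzx.symm hne
        (collinear_of_dirn_eq hyx.symm hyz)
    have hsubset : (T.erase x).image (dirn x) ⊆ Dset p := by
      intro m hm
      obtain ⟨y, hy, rfl⟩ := Finset.mem_image.mp hm
      exact dirn_mem_Dset hp4 (hintT x hx y (Finset.mem_of_mem_erase hy))
    have hcards : (Dset p).card ≤ ((T.erase x).image (dirn x)).card := by
      rw [Finset.card_image_of_injOn hinj, Finset.card_erase_of_mem hx, hTcard, card_Dset hp4]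
      omega
    have heq : (T.erase x).image (dirn x) = Dset p :=
      Finset.eq_of_subset_of_card_le hsubset hcards
    have hnone : none ∈ (T.erase x).image (dirn x) := by
      rw [heq]; exact Finset.mem_insert_self _ _
    obtain ⟨y, hy, hdy⟩ := Finset.mem_image.mp hnone
    exact ⟨y, Finset.mem_of_mem_erase hy, (Finset.mem_erase.mp hy).1,
      (dirn_eq_none_iff.mp hdy).symm⟩
  have huniq : ∀ x ∈ T, ∀ y ∈ T, ∀ z ∈ T, y ≠ x → z ≠ x → y.1 = x.1 → z.1 = x.1 → y = z := by
    intro x hx y hy z hz hyx hzx hy1 hz1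
    by_contra hne
    apply hsgpT x hx y hy z hz hyx.symm hzx.symm hne
    apply collinear_of_dirn_eq hyx.symm
    rw [dirn_eq_none_iff.mpr hy1.symm, dirn_eq_none_iff.mpr hz1.symm]
  classical
  let f : (ZMod p × ZMod p) → (ZMod p × ZMod p) :=
    fun x => if hx : x ∈ T then (hpair x hx).choose else x
  have hfmem : ∀ x ∈ T, f x ∈ T := by
    intro x hx
    simp only [f, dif_pos hx]
    exact (hpair x hx).choose_spec.1
  have hfne : ∀ x ∈ T, f x ≠ x := by
    intro x hx
    simp only [f, dif_pos hx]
    exact (hpair x hx).choose_spec.2.1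
  have hf1 : ∀ x ∈ T, (f x).1 = x.1 := by
    intro x hx
    simp only [f, dif_pos hx]
    exact (hpair x hx).choose_spec.2.2
  have hinv : ∀ x ∈ T, f (f x) = x := by
    intro x hx
    have h1 := hfmem x hx
    apply huniq (f x) h1 (f (f x)) (hfmem _ h1) x hx (hfne _ h1)
    · exact (hfne x hx).symm
    · exact hf1 _ h1
    · exact (hf1 x hx).symm
  have heven : Even T.card := even_card_of_pairing T f hfmem hfne hinv
  obtain ⟨r, hr⟩ := heven
  omega

end Upper

theorem maxIntegralCardSGP_of_three_mod_four (p : ℕ) (hp : p.Prime)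
    (hp4 : p % 4 = 3) :
    maxIntegralCardSGP p = (p + 1) / 2 := by
  haveI : Fact p.Prime := ⟨hp⟩
  unfold maxIntegralCardSGP
  apply le_antisymm
  · apply csSup_le
    · exact ⟨0, ∅, by simp [IntegralDistance2], by intro a ha; simp at ha, rfl⟩
    · rintro k ⟨S, hint, hsgp, rfl⟩
      exact upper_bound hp4 S hint hsgp
  · apply le_csSup
    · refine ⟨(p + 1) / 2, ?_⟩
      rintro k ⟨S, hint, hsgp, rfl⟩
      exact upper_bound hp4 S hint hsgp
    · refine ⟨cSet p, ?_, cSet_sgp hp4, cSet_card hp4⟩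
      intro u hu v hv
      obtain ⟨a, -, rfl⟩ := Finset.mem_image.mp hu
      obtain ⟨b, -, rfl⟩ := Finset.mem_image.mp hv
      exact hpt_integral hp4 a b
end Dir
end

section
/- Let p be an odd prime, m a positive integer, and let δ_{i,j} ∈ ℤ/pℤ (1 ≤ i,j ≤ r) be symmetric with δ_{i,i} = 0 and δ_{i,j} ≠ 0 for i ≠ j, such that for every index subset {i_1,…,i_t} of cardinality t = m+2 and of cardinality t = m+3 the Cayley–Menger determinant V²_{t−1}({i_1,…,i_t}) vanishes (so that δ is an integral point set over E_p^m in the coordinate-free sense). Then for any two index subsets T₁, T₂ of cardinality m+1 with V²_m(T₁) ≠ 0 and V²_m(T₂) ≠ 0, the product V²_m(T₁) · V²_m(T₂) is a nonzero square in ℤ/pℤ; that is, every non-degenerate simplex of the point set has the same characteristic. -/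
/-- The Cayley–Menger determinant `V²_{t-1}` of the `t` points with indices
`f 0, …, f (t-1)`, for a distance matrix `δ`: the determinant of the
`(t+1) × (t+1)` matrix whose upper-left `t × t` block has `(k,l)` entry
`δ (f k) (f l) ^ 2`, and whose last row and column consist of ones, except
the bottom-right entry, which is `0`. -/
def cayleyMenger {R : Type*} [CommRing R] {r : ℕ} (δ : Fin r → Fin r → R)
    {t : ℕ} (f : Fin t → Fin r) : R :=
  Matrix.det (Matrix.of fun i j : Fin (t + 1) =>
    if hi : (i : ℕ) < t then
      if hj : (j : ℕ) < t then δ (f ⟨i, hi⟩) (f ⟨j, hj⟩) ^ 2 else 1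
    else
      if (j : ℕ) < t then 1 else 0)

open Matrix

section Aux

variable {K : Type*} [Field K] {ι : Type*} [DecidableEq ι]
  {n : Type*} [Fintype n] [DecidableEq n]

/-- entry of a bordered triple product depends only on the chosen row/col. -/
lemma entry_gen (B : Matrix ι ι K) (F : n → ι) (X : Matrix n n K)
    {o o' : Type*} [Fintype o] [Fintype o'] (v : o → ι) (w : o' → ι) (i : o) (j : o') :
    (B.submatrix v F * X * B.submatrix F w) i j =
      (B.submatrix (fun _ : Fin 1 => v i) F * X * B.submatrix F (fun _ : Fin 1 => w j)) 0 0 := by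
  simp [Matrix.mul_apply]

lemma aux_key (B : Matrix ι ι K) (hBt : Bᵀ = B)
    (F : n → ι) (hA : IsUnit (B.submatrix F F).det)
    (h1 : ∀ a : ι, a ∉ Set.range F →
      (B.submatrix (Sum.elim F fun _ : Fin 1 => a) (Sum.elim F fun _ : Fin 1 => a)).det = 0)
    (h2 : ∀ a b : ι, a ∉ Set.range F → b ∉ Set.range F → a ≠ b →
      (B.submatrix (Sum.elim F ![a, b]) (Sum.elim F ![a, b])).det = 0) :
    ∀ a b : ι, B a b =
      (B.submatrix (fun _ : Fin 1 => a) F * (B.submatrix F F)⁻¹ *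
        B.submatrix F (fun _ : Fin 1 => b)) 0 0 := by
  classical
  set A := B.submatrix F F with hAdef
  haveI : Invertible A := A.invertibleOfIsUnitDet hA
  have hB : ∀ x y, B x y = B y x := fun x y => by
    exact congrFun (congrFun hBt.symm x) y
  have hAt : Aᵀ = A := by
    ext k l; simp [hAdef, hB (F l) (F k)]
  have hAit : (A⁻¹)ᵀ = A⁻¹ := by
    rw [Matrix.transpose_nonsing_inv, hAt]
  -- symmetry of the bilinear expression
  have hTsymm : ∀ a b : ι,
      (B.submatrix (fun _ : Fin 1 => a) F * A⁻¹ * B.submatrix F (fun _ : Fin 1 => b)) 0 0 =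
      (B.submatrix (fun _ : Fin 1 => b) F * A⁻¹ * B.submatrix F (fun _ : Fin 1 => a)) 0 0 := by
    intro a b
    have hcol : ∀ c : ι, (B.submatrix F (fun _ : Fin 1 => c))ᵀ
        = B.submatrix (fun _ : Fin 1 => c) F := by
      intro c; ext i j; simp [hB]
    have : (B.submatrix (fun _ : Fin 1 => b) F * A⁻¹ * B.submatrix F (fun _ : Fin 1 => a))ᵀ
        = B.submatrix (fun _ : Fin 1 => a) F * A⁻¹ * B.submatrix F (fun _ : Fin 1 => b) := by
      rw [Matrix.transpose_mul, Matrix.transpose_mul, hcol a, hAit, ← Matrix.mul_assoc]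
      congr 1
      rw [← hcol b, Matrix.transpose_transpose]
    calc (B.submatrix (fun _ : Fin 1 => a) F * A⁻¹ * B.submatrix F (fun _ : Fin 1 => b)) 0 0
        = (B.submatrix (fun _ : Fin 1 => b) F * A⁻¹ * B.submatrix F (fun _ : Fin 1 => a))ᵀ 0 0 := by
          rw [this]
      _ = _ := rfl
  -- the case b in range F
  have hcase_b : ∀ (a : ι) (l₀ : n), B a (F l₀) =
      (B.submatrix (fun _ : Fin 1 => a) F * A⁻¹ * B.submatrix F (fun _ : Fin 1 => F l₀)) 0 0 := by
    intro a l₀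
    have h1' : (B.submatrix (fun _ : Fin 1 => a) F * A⁻¹ * B.submatrix F (fun _ : Fin 1 => F l₀)) 0 0
        = ((B.submatrix (fun _ : Fin 1 => a) F * A⁻¹) * A) 0 l₀ := by
      simp [Matrix.mul_apply, hAdef]
    rw [h1', Matrix.mul_assoc, Matrix.nonsing_inv_mul A hA, Matrix.mul_one]
    simp
  -- the case a in range F
  have hcase_a : ∀ (k₀ : n) (b : ι), B (F k₀) b =
      (B.submatrix (fun _ : Fin 1 => F k₀) F * A⁻¹ * B.submatrix F (fun _ : Fin 1 => b)) 0 0 := by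
    intro k₀ b
    have h0' : B.submatrix (fun _ : Fin 1 => F k₀) F = A.submatrix (fun _ : Fin 1 => k₀) id := by
      ext i j; rfl
    have h1' : A.submatrix (fun _ : Fin 1 => k₀) id * A⁻¹
        = (1 : Matrix n n K).submatrix (fun _ : Fin 1 => k₀) id := by
      ext i j
      simp only [Matrix.mul_apply, Matrix.submatrix_apply, id_eq]
      rw [← Matrix.mul_apply, Matrix.mul_nonsing_inv A hA]; rfl
    rw [h0', h1']
    simp [Matrix.mul_apply, Matrix.one_apply]
  -- the diagonal case outside the range
  have hdiagcase : ∀ a : ι, a ∉ Set.range F → B a a =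
      (B.submatrix (fun _ : Fin 1 => a) F * A⁻¹ * B.submatrix F (fun _ : Fin 1 => a)) 0 0 := by
    intro a ha
    have h0 := h1 a ha
    have heq : B.submatrix (Sum.elim F fun _ : Fin 1 => a) (Sum.elim F fun _ : Fin 1 => a)
        = Matrix.fromBlocks A (B.submatrix F (fun _ : Fin 1 => a))
            (B.submatrix (fun _ : Fin 1 => a) F)
            (B.submatrix (fun _ : Fin 1 => a) (fun _ : Fin 1 => a)) := by
      ext k l
      rcases k with k | k <;> rcases l with l | l <;> rfl
    rw [heq, Matrix.det_fromBlocks₁₁, Matrix.invOf_eq_nonsing_inv] at h0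
    rcases mul_eq_zero.mp h0 with h | h
    · exact absurd h hA.ne_zero
    · rw [Matrix.det_fin_one, Matrix.sub_apply] at h
      exact sub_eq_zero.mp h
  -- now the general statement
  intro a b
  by_cases hb : b ∈ Set.range F
  · obtain ⟨l₀, rfl⟩ := hb; exact hcase_b a l₀
  by_cases ha : a ∈ Set.range F
  · obtain ⟨k₀, rfl⟩ := ha; exact hcase_a k₀ b
  by_cases hab : a = b
  · subst hab; exact hdiagcase a ha
  · -- the 2x2 Schur case
    have h0 := h2 a b ha hb hab
    have heq : B.submatrix (Sum.elim F ![a, b]) (Sum.elim F ![a, b])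
        = Matrix.fromBlocks A (B.submatrix F ![a, b])
            (B.submatrix ![a, b] F) (B.submatrix ![a, b] ![a, b]) := by
      ext k l
      rcases k with k | k <;> rcases l with l | l <;> rfl
    rw [heq, Matrix.det_fromBlocks₁₁, Matrix.invOf_eq_nonsing_inv] at h0
    rcases mul_eq_zero.mp h0 with h | h
    · exact absurd h hA.ne_zero
    · set S := B.submatrix ![a, b] ![a, b] - B.submatrix ![a, b] F * A⁻¹ * B.submatrix F ![a, b]
        with hSdef
      have hS00 : S 0 0 = 0 := by
        rw [hSdef, Matrix.sub_apply, entry_gen B F A⁻¹ ![a, b] ![a, b] 0 0]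
        simp only [Matrix.submatrix_apply, Matrix.cons_val_zero]
        rw [← hdiagcase a ha]
        simp [sub_eq_zero]
      have hS11 : S 1 1 = 0 := by
        rw [hSdef, Matrix.sub_apply, entry_gen B F A⁻¹ ![a, b] ![a, b] 1 1]
        simp only [Matrix.submatrix_apply, Matrix.cons_val_one, Matrix.head_cons, Matrix.cons_val_zero]
        rw [← hdiagcase b hb]
        simp [sub_eq_zero]
      have hS10 : S 1 0 = S 0 1 := by
        rw [hSdef, Matrix.sub_apply, Matrix.sub_apply,
          entry_gen B F A⁻¹ ![a, b] ![a, b] 1 0, entry_gen B F A⁻¹ ![a, b] ![a, b] 0 1]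
        simp only [Matrix.submatrix_apply, Matrix.cons_val_zero, Matrix.cons_val_one,
          Matrix.head_cons]
        rw [hTsymm b a, hB b a]
      rw [Matrix.det_fin_two, hS00, hS11, hS10] at h
      have hS01 : S 0 1 = 0 := by
        have : S 0 1 * S 0 1 = 0 := by linear_combination -h
        exact mul_self_eq_zero.mp this
      have := hS01
      rw [hSdef, Matrix.sub_apply, entry_gen B F A⁻¹ ![a, b] ![a, b] 0 1] at this
      simp only [Matrix.submatrix_apply, Matrix.cons_val_zero, Matrix.cons_val_one,
        Matrix.head_cons] at this
      exact sub_eq_zero.mp this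

/-- Rank factorization: any other principal block factors through the invertible one. -/
lemma aux_factor (B : Matrix ι ι K) (hBt : Bᵀ = B)
    (F : n → ι) (hA : IsUnit (B.submatrix F F).det)
    (h1 : ∀ a : ι, a ∉ Set.range F →
      (B.submatrix (Sum.elim F fun _ : Fin 1 => a) (Sum.elim F fun _ : Fin 1 => a)).det = 0)
    (h2 : ∀ a b : ι, a ∉ Set.range F → b ∉ Set.range F → a ≠ b →
      (B.submatrix (Sum.elim F ![a, b]) (Sum.elim F ![a, b])).det = 0)
    (G : n → ι) :
    ∃ P : Matrix n n K, B.submatrix G G = P * B.submatrix F F * Pᵀ := by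
  classical
  have key := aux_key B hBt F hA h1 h2
  set A := B.submatrix F F with hAdef
  refine ⟨B.submatrix G F * A⁻¹, ?_⟩
  have hAt : Aᵀ = A := by
    ext k l
    simp only [hAdef, Matrix.transpose_apply, Matrix.submatrix_apply]
    exact congrFun (congrFun hBt.symm (F l)) (F k)
  have hPt : (B.submatrix G F * A⁻¹)ᵀ = A⁻¹ * B.submatrix F G := by
    rw [Matrix.transpose_mul, Matrix.transpose_nonsing_inv, hAt, Matrix.transpose_submatrix, hBt]
  rw [hPt, Matrix.mul_assoc (B.submatrix G F) A⁻¹ A, Matrix.nonsing_inv_mul A hA,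
    Matrix.mul_one, ← Matrix.mul_assoc]
  ext j j'
  rw [entry_gen B F A⁻¹ G G j j', ← key (G j) (G j')]
  rfl

end Aux

section Translate

variable {p r : ℕ} (δ : Fin r → Fin r → ZMod p)

/-- The bordered distance-square matrix. -/
def bigB : Matrix (Fin r ⊕ Fin 1) (Fin r ⊕ Fin 1) (ZMod p) :=
  Matrix.of fun x y =>
    match x, y with
    | .inl i, .inl j => δ i j ^ 2
    | .inl _, .inr _ => 1
    | .inr _, .inl _ => 1
    | .inr _, .inr _ => 0

lemma bigB_symm (hsymm : ∀ i j, δ i j = δ j i) : (bigB δ)ᵀ = bigB δ := by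
  ext x y
  rcases x with i | i <;> rcases y with j | j <;>
    simp only [Matrix.transpose_apply, bigB, Matrix.of_apply]
  exact hsymm j i ▸ rfl

/-- Translation between `cayleyMenger` and determinants of submatrices of `bigB`. -/
lemma translateCM {t : ℕ} (f : Fin t → Fin r) :
    cayleyMenger δ f =
      ((bigB δ).submatrix (Sum.elim (Sum.inl ∘ f) Sum.inr)
        (Sum.elim (Sum.inl ∘ f) Sum.inr) : Matrix (Fin t ⊕ Fin 1) (Fin t ⊕ Fin 1) (ZMod p)).det := by
  unfold cayleyMenger
  rw [← Matrix.det_submatrix_equiv_self (finSumFinEquiv : Fin t ⊕ Fin 1 ≃ Fin (t + 1))]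
  congr 1
  ext k l
  rcases k with k | k <;> rcases l with l | l <;>
    simp [Matrix.submatrix_apply, bigB, finSumFinEquiv, Fin.castAdd, Fin.natAdd,
      Fin.is_lt, Fin.castLT]

end Translate

section Translate2

variable {p r : ℕ} (δ : Fin r → Fin r → ZMod p)

lemma translate2 {t q : ℕ} (f : Fin t → Fin r) (v : Fin q → Fin r) :
    ((bigB δ).submatrix (Sum.elim (Sum.elim (Sum.inl ∘ f) Sum.inr) (Sum.inl ∘ v))
      (Sum.elim (Sum.elim (Sum.inl ∘ f) Sum.inr) (Sum.inl ∘ v))).det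
    = cayleyMenger δ (Sum.elim f v ∘ (finSumFinEquiv : Fin t ⊕ Fin q ≃ Fin (t + q)).symm) := by
  rw [translateCM]
  set u : Fin (t + q) ⊕ Fin 1 → Fin r ⊕ Fin 1 :=
    Sum.elim (Sum.inl ∘ (Sum.elim f v ∘ (finSumFinEquiv : Fin t ⊕ Fin q ≃ Fin (t + q)).symm))
      Sum.inr with hu
  have hσ : ∀ k : (Fin t ⊕ Fin 1) ⊕ Fin q,
      u ((((Equiv.sumAssoc (Fin t) (Fin 1) (Fin q)).trans
        ((Equiv.refl (Fin t)).sumCongr (Equiv.sumComm (Fin 1) (Fin q)))).trans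
        (((Equiv.sumAssoc (Fin t) (Fin q) (Fin 1)).symm).trans
          (finSumFinEquiv.sumCongr (Equiv.refl (Fin 1))))) k)
      = Sum.elim (Sum.elim (Sum.inl ∘ f) Sum.inr) (Sum.inl ∘ v) k := by
    rintro ((k | k) | k) <;>
      simp [hu, Equiv.sumAssoc, Equiv.sumComm, Equiv.sumCongr]
  rw [← Matrix.det_submatrix_equiv_self
    ((((Equiv.sumAssoc (Fin t) (Fin 1) (Fin q)).trans
        ((Equiv.refl (Fin t)).sumCongr (Equiv.sumComm (Fin 1) (Fin q)))).trans
        (((Equiv.sumAssoc (Fin t) (Fin q) (Fin 1)).symm).trans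
          (finSumFinEquiv.sumCongr (Equiv.refl (Fin 1))))))
    ((bigB δ).submatrix u u)]
  congr 1
  ext k l
  rw [Matrix.submatrix_apply, Matrix.submatrix_apply, Matrix.submatrix_apply, hσ k, hσ l]

lemma elim_inj {α : Type*} {t q : ℕ} {f : Fin t → α} {v : Fin q → α}
    (hf : Function.Injective f) (hv : Function.Injective v)
    (hd : ∀ k l, f k ≠ v l) : Function.Injective (Sum.elim f v) := by
  rintro (x | x) (y | y) h
  · exact congrArg Sum.inl (hf h)
  · exact absurd h (hd x y)
  · exact absurd h.symm (hd y x)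
  · exact congrArg Sum.inr (hv h)

end Translate2

theorem same_characteristic (p m r : ℕ) (hp : p.Prime) (hodd : p ≠ 2)
    (hm : 0 < m) (δ : Fin r → Fin r → ZMod p)
    (hsymm : ∀ i j, δ i j = δ j i)
    (hdiag : ∀ i, δ i i = 0)
    (hne : ∀ i j, i ≠ j → δ i j ≠ 0)
    (hCM2 : ∀ f : Fin (m + 2) → Fin r, Function.Injective f →
      cayleyMenger δ f = 0)
    (hCM3 : ∀ f : Fin (m + 3) → Fin r, Function.Injective f →
      cayleyMenger δ f = 0) :
    ∀ f g : Fin (m + 1) → Fin r, Function.Injective f → Function.Injective g →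
      cayleyMenger δ f ≠ 0 → cayleyMenger δ g ≠ 0 →
        ∃ s : ZMod p, s ≠ 0 ∧ cayleyMenger δ f * cayleyMenger δ g = s ^ 2 := by
  intro f g hf hg hfne hgne
  haveI : Fact p.Prime := ⟨hp⟩
  set B := bigB δ with hBdef
  have hBt := bigB_symm δ hsymm
  set F : (Fin (m + 1) ⊕ Fin 1) → (Fin r ⊕ Fin 1) := Sum.elim (Sum.inl ∘ f) Sum.inr with hF
  set G : (Fin (m + 1) ⊕ Fin 1) → (Fin r ⊕ Fin 1) := Sum.elim (Sum.inl ∘ g) Sum.inr with hG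
  have hFA : cayleyMenger δ f = (B.submatrix F F).det := translateCM δ f
  have hGA : cayleyMenger δ g = (B.submatrix G G).det := translateCM δ g
  have hA : IsUnit (B.submatrix F F).det :=
    isUnit_iff_ne_zero.mpr (by rw [← hFA]; exact hfne)
  have hrange : ∀ a : Fin r, (Sum.inl a : Fin r ⊕ Fin 1) ∉ Set.range F → a ∉ Set.range f := by
    rintro a h ⟨k, hk⟩
    exact h ⟨Sum.inl k, show (Sum.inl (f k) : Fin r ⊕ Fin 1) = Sum.inl a from congrArg Sum.inl hk⟩
  have h1 : ∀ a : Fin r ⊕ Fin 1, a ∉ Set.range F →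
      (B.submatrix (Sum.elim F fun _ : Fin 1 => a) (Sum.elim F fun _ : Fin 1 => a)).det = 0 := by
    intro a ha
    rcases a with a' | j
    · have ha' : a' ∉ Set.range f := hrange a' ha
      rw [hF, show (fun _ : Fin 1 => (Sum.inl a' : Fin r ⊕ Fin 1)) =
        Sum.inl ∘ (fun _ : Fin 1 => a') from rfl, translate2]
      refine hCM2 _ (Function.Injective.comp ?_ (Equiv.injective _))
      exact elim_inj hf (fun x y _ => Subsingleton.elim x y)
        (fun k l hkl => ha' ⟨k, hkl⟩)
    · exact absurd ⟨Sum.inr j, rfl⟩ ha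
  have h2 : ∀ a b : Fin r ⊕ Fin 1, a ∉ Set.range F → b ∉ Set.range F → a ≠ b →
      (B.submatrix (Sum.elim F ![a, b]) (Sum.elim F ![a, b])).det = 0 := by
    intro a b ha hb hab
    rcases a with a' | j
    · rcases b with b' | j
      · have ha' : a' ∉ Set.range f := hrange a' ha
        have hb' : b' ∉ Set.range f := hrange b' hb
        have hab' : a' ≠ b' := fun h => hab (congrArg Sum.inl h)
        rw [hF, show (![Sum.inl a', Sum.inl b'] : Fin 2 → Fin r ⊕ Fin 1) =
          Sum.inl ∘ ![a', b'] from by funext k; fin_cases k <;> rfl, translate2]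
        refine hCM3 _ (Function.Injective.comp ?_ (Equiv.injective _))
        refine elim_inj hf ?_ ?_
        · intro x y hxy
          fin_cases x <;> fin_cases y <;> simp_all
        · intro k l hkl
          fin_cases l
          · exact ha' ⟨k, hkl⟩
          · exact hb' ⟨k, hkl⟩
      · exact absurd ⟨Sum.inr j, rfl⟩ hb
    · exact absurd ⟨Sum.inr j, rfl⟩ ha
  obtain ⟨P, hP⟩ := aux_factor B hBt F hA h1 h2 G
  refine ⟨P.det * (B.submatrix F F).det, ?_, ?_⟩
  · intro h0
    apply mul_ne_zero hfne hgne
    rw [hFA, hGA, hP, Matrix.det_mul, Matrix.det_mul, Matrix.det_transpose]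
    have : P.det * (B.submatrix F F).det = 0 := h0
    calc (B.submatrix F F).det * (P.det * (B.submatrix F F).det * P.det)
        = (P.det * (B.submatrix F F).det) * (P.det * (B.submatrix F F).det) := by ring
      _ = 0 := by rw [this]; ring
  · rw [hFA, hGA, hP, Matrix.det_mul, Matrix.det_mul, Matrix.det_transpose]
    ring
end
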